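/- arXiv:1601.00145 — 5 statements merged into one kernel-verified Lean document; each statement's English description precedes it below -/
import Mathlib

section
/- If all n centers of a packing of n ≥ 2 unit balls are lattice points of the face-centered cubic lattice with shortest nonzero vector of length 2, then the number of touching pairs is less than 6n − (3·(18π)^(1/3)/π)·n^(2/3). -/
open scoped Classical

noncomputable section

/-- Twice the contact number: the number of ordered pairs of distinct centers in `P`
at distance exactly `2`. -/
def contactsOrdered {d : ℕ} (P : Finset (EuclideanSpace ℝ (Fin d))) : ℕ :=
  (P.offDiag.filter fun p => dist p.1 p.2 = 2).card

/-- The face-centered cubic lattice with shortest nonzero vector of length `2`: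
points of `√2 · ℤ³` whose coordinate sum lies in `2√2 · ℤ`. -/
def fccLattice : Set (EuclideanSpace ℝ (Fin 3)) :=
  {v | (∀ i, ∃ m : ℤ, v i = m * Real.sqrt 2) ∧
    ∃ m : ℤ, v 0 + v 1 + v 2 = m * (2 * Real.sqrt 2)}

namespace FccProof

/-- Transfer lemma: if `g`-equality implies `f`-equality on `S`, the `f`-image is
at most as large as the `g`-image. -/
lemma image_card_le {α β γ : Type*} [DecidableEq β] [DecidableEq γ]
    (S : Finset α) (g : α → β) (f : α → γ)
    (h : ∀ x ∈ S, ∀ y ∈ S, g x = g y → f x = f y) :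
    (S.image f).card ≤ (S.image g).card := by
  rcases S.eq_empty_or_nonempty with rfl | ⟨x0, hx0⟩
  · simp
  classical
  set φ : β → γ := fun b =>
    if hb : (S.filter fun x => g x = b).Nonempty then f hb.choose else f x0 with hφ
  have hsub : S.image f ⊆ (S.image g).image φ := by
    intro cv hc
    obtain ⟨x, hx, rfl⟩ := Finset.mem_image.1 hc
    refine Finset.mem_image.2 ⟨g x, Finset.mem_image_of_mem _ hx, ?_⟩
    have hb : (S.filter fun y => g y = g x).Nonempty :=
      ⟨x, Finset.mem_filter.2 ⟨hx, rfl⟩⟩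
    have hspec := hb.choose_spec
    rw [Finset.mem_filter] at hspec
    simp only [hφ, dif_pos hb]
    exact h _ hspec.1 _ hx hspec.2
  exact (Finset.card_le_card hsub).trans Finset.card_image_le

/-- Line lemma: the number of points of `S` having their `+v`-translate in `S`,
plus the number of `v`-lines meeting `S`, is at most `|S|`. -/
lemma line_lemma (S : Finset (ℤ × ℤ × ℤ)) (v : ℤ × ℤ × ℤ) (g : ℤ × ℤ × ℤ → ℤ × ℤ)
    (h : ℤ × ℤ × ℤ → ℤ) (hg : ∀ x, g (x + v) = g x) (hh : ∀ x, h x < h (x + v)) :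
    (S.filter fun x => x + v ∈ S).card + (S.image g).card ≤ S.card := by
  classical
  have h1 : (S.filter fun x => x + v ∈ S).card + (S.filter fun x => ¬ (x + v ∈ S)).card
      = S.card := Finset.card_filter_add_card_filter_not _
  have h2 : S.image g ⊆ (S.filter fun x => ¬ (x + v ∈ S)).image g := by
    intro b hb
    obtain ⟨x, hx, rfl⟩ := Finset.mem_image.1 hb
    have hFne : (S.filter fun y => g y = g x).Nonempty :=
      ⟨x, Finset.mem_filter.2 ⟨hx, rfl⟩⟩
    obtain ⟨y, hyF, hymax⟩ := Finset.exists_max_image _ h hFne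
    obtain ⟨hyS, hgy⟩ := Finset.mem_filter.1 hyF
    have hyT : y ∈ S.filter fun x => ¬ (x + v ∈ S) := by
      refine Finset.mem_filter.2 ⟨hyS, fun hcmem => ?_⟩
      have hmem : y + v ∈ S.filter fun z => g z = g x :=
        Finset.mem_filter.2 ⟨hcmem, by rw [hg]; exact hgy⟩
      exact absurd (hymax _ hmem) (not_le.2 (hh y))
    exact Finset.mem_image.2 ⟨y, hyT, hgy⟩
  have h3 := (Finset.card_le_card h2).trans Finset.card_image_le
  omega


/-- Discrete Loomis–Whitney inequality in `ℤ³`. -/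
lemma lw (S : Finset (ℤ × ℤ × ℤ)) :
    S.card ^ 2 ≤ (S.image fun x => (x.2.1, x.2.2)).card *
      ((S.image fun x => (x.1, x.2.2)).card * (S.image fun x => (x.1, x.2.1)).card) := by
  classical
  set A : Finset ℤ := S.image fun x => x.1 with hA
  set P23 : ℕ := (S.image fun x => (x.2.1, x.2.2)).card
  set P13 : ℕ := (S.image fun x => (x.1, x.2.2)).card
  set P12 : ℕ := (S.image fun x => (x.1, x.2.1)).card
  set sl : ℤ → Finset (ℤ × ℤ × ℤ) := fun a => S.filter fun x => x.1 = a with hsl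
  set u : ℤ → ℕ := fun a => ((sl a).image fun x => x.2.1).card with hu
  set w : ℤ → ℕ := fun a => ((sl a).image fun x => x.2.2).card with hw
  have hcard : S.card = ∑ a ∈ A, (sl a).card :=
    Finset.card_eq_sum_card_fiberwise fun x hx => Finset.mem_image_of_mem _ hx
  -- each slice is injectively mapped by the (2,3)-projection
  have hslinj : ∀ a : ℤ, Set.InjOn (fun x : ℤ × ℤ × ℤ => (x.2.1, x.2.2)) (sl a) := by
    intro a x hx y hy hxy
    simp only [hsl, Finset.coe_filter, Set.mem_setOf_eq] at hx hy
    simp only [Prod.mk.injEq] at hxy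
    exact Prod.ext (hx.2.trans hy.2.symm) (Prod.ext hxy.1 hxy.2)
  have hsl_eq : ∀ a : ℤ, (sl a).card = ((sl a).image fun x => (x.2.1, x.2.2)).card :=
    fun a => (Finset.card_image_of_injOn (hslinj a)).symm
  -- claim 1 : slice card ≤ P23
  have hclaim1 : ∀ a : ℤ, (sl a).card ≤ P23 := by
    intro a
    rw [hsl_eq a]
    exact Finset.card_le_card (Finset.image_subset_image (Finset.filter_subset _ _))
  -- claim 2 : slice card ≤ u a * w a
  have hclaim2 : ∀ a : ℤ, (sl a).card ≤ u a * w a := by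
    intro a
    rw [hsl_eq a]
    have hsub : ((sl a).image fun x => (x.2.1, x.2.2)) ⊆
        ((sl a).image fun x => x.2.1) ×ˢ ((sl a).image fun x => x.2.2) := by
      intro p hp
      obtain ⟨x, hx, rfl⟩ := Finset.mem_image.1 hp
      exact Finset.mem_product.2 ⟨Finset.mem_image_of_mem _ hx, Finset.mem_image_of_mem _ hx⟩
    calc ((sl a).image fun x => (x.2.1, x.2.2)).card ≤ _ := Finset.card_le_card hsub
      _ = u a * w a := Finset.card_product _ _
  -- claim 3 : ∑ u ≤ P12
  have hclaim3 : ∑ a ∈ A, u a ≤ P12 := by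
    have h1 : (S.image fun x => (x.1, x.2.1)).card
        = ∑ a ∈ A, ((S.image fun x => (x.1, x.2.1)).filter fun y => y.1 = a).card := by
      apply Finset.card_eq_sum_card_fiberwise
      intro y hy
      obtain ⟨x, hx, rfl⟩ := Finset.mem_image.1 hy
      exact Finset.mem_image_of_mem _ hx
    rw [show P12 = _ from h1]
    apply Finset.sum_le_sum
    intro a _
    apply Finset.card_le_card_of_injOn (fun m => (a, m))
    · intro m hm
      obtain ⟨x, hx, rfl⟩ := Finset.mem_image.1 hm
      obtain ⟨hxS, hx1⟩ := Finset.mem_filter.1 hx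
      exact Finset.mem_filter.2 ⟨Finset.mem_image.2 ⟨x, hxS, by rw [hx1]⟩, rfl⟩
    · intro m₁ _ m₂ _ h
      simpa using h
  -- claim 4 : ∑ w ≤ P13
  have hclaim4 : ∑ a ∈ A, w a ≤ P13 := by
    have h1 : (S.image fun x => (x.1, x.2.2)).card
        = ∑ a ∈ A, ((S.image fun x => (x.1, x.2.2)).filter fun y => y.1 = a).card := by
      apply Finset.card_eq_sum_card_fiberwise
      intro y hy
      obtain ⟨x, hx, rfl⟩ := Finset.mem_image.1 hy
      exact Finset.mem_image_of_mem _ hx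
    rw [show P13 = _ from h1]
    apply Finset.sum_le_sum
    intro a _
    apply Finset.card_le_card_of_injOn (fun m => (a, m))
    · intro m hm
      obtain ⟨x, hx, rfl⟩ := Finset.mem_image.1 hm
      obtain ⟨hxS, hx1⟩ := Finset.mem_filter.1 hx
      exact Finset.mem_filter.2 ⟨Finset.mem_image.2 ⟨x, hxS, by rw [hx1]⟩, rfl⟩
    · intro m₁ _ m₂ _ h
      simpa using h
  -- now work in ℝ
  have hreal : (S.card : ℝ) ^ 2 ≤ (P23 : ℝ) * ((P13 : ℝ) * (P12 : ℝ)) := by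
    have hstep1 : (S.card : ℝ) ≤ ∑ a ∈ A, Real.sqrt ((P23 * u a : ℕ) * (w a : ℕ)) := by
      rw [hcard]
      push_cast
      apply Finset.sum_le_sum
      intro a _
      rw [show ((P23 : ℝ) * (u a : ℝ)) * (w a : ℝ) = ((P23 * u a * w a : ℕ) : ℝ) by push_cast; ring]
      have hle : ((sl a).card : ℝ) = Real.sqrt (((sl a).card ^ 2 : ℕ)) := by
        push_cast
        rw [Real.sqrt_sq (by positivity)]
      rw [hle]
      apply Real.sqrt_le_sqrt
      have : (sl a).card ^ 2 ≤ P23 * u a * w a := by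
        calc (sl a).card ^ 2 = (sl a).card * (sl a).card := sq ((sl a).card)
          _ ≤ P23 * (u a * w a) := Nat.mul_le_mul (hclaim1 a) (hclaim2 a)
          _ = P23 * u a * w a := by ring
      exact_mod_cast this
    have hstep2 : (∑ a ∈ A, Real.sqrt ((P23 * u a : ℕ) * (w a : ℕ))) ^ 2 ≤
        (∑ a ∈ A, ((P23 * u a : ℕ) : ℝ)) * ∑ a ∈ A, ((w a : ℕ) : ℝ) := by
      apply Finset.sum_sq_le_sum_mul_sum_of_sq_eq_mul
      · intro i _; positivity
      · intro i _; positivity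
      · intro i _
        rw [Real.sq_sqrt (by positivity)]
    have hsums : (∑ a ∈ A, ((P23 * u a : ℕ) : ℝ)) * (∑ a ∈ A, ((w a : ℕ) : ℝ))
        ≤ (P23 : ℝ) * (P12 : ℝ) * (P13 : ℝ) := by
      have e1 : (∑ a ∈ A, ((P23 * u a : ℕ) : ℝ)) = (P23 : ℝ) * ∑ a ∈ A, (u a : ℝ) := by
        push_cast; rw [Finset.mul_sum]
      have l3 : (∑ a ∈ A, (u a : ℝ)) ≤ (P12 : ℝ) := by exact_mod_cast hclaim3
      have l4 : (∑ a ∈ A, (w a : ℝ)) ≤ (P13 : ℝ) := by exact_mod_cast hclaim4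
      have n3 : (0:ℝ) ≤ ∑ a ∈ A, (u a : ℝ) := Finset.sum_nonneg fun a _ => Nat.cast_nonneg _
      have n4 : (0:ℝ) ≤ ∑ a ∈ A, (w a : ℝ) := Finset.sum_nonneg fun a _ => Nat.cast_nonneg _
      rw [e1, mul_assoc, mul_assoc]
      refine mul_le_mul_of_nonneg_left ?_ (Nat.cast_nonneg _)
      exact mul_le_mul l3 l4 n4 (Nat.cast_nonneg _)
    calc (S.card : ℝ) ^ 2 ≤ (∑ a ∈ A, Real.sqrt ((P23 * u a : ℕ) * (w a : ℕ))) ^ 2 := by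
          apply pow_le_pow_left₀ (by positivity) hstep1
      _ ≤ _ := hstep2
      _ ≤ (P23 : ℝ) * (P12 : ℝ) * (P13 : ℝ) := hsums
      _ = (P23 : ℝ) * ((P13 : ℝ) * (P12 : ℝ)) := by ring
  exact_mod_cast hreal


/-- Loomis–Whitney transferred along three functionals. -/
lemma lw_applied (S : Finset (ℤ × ℤ × ℤ)) (ψ1 ψ2 ψ3 : ℤ × ℤ × ℤ → ℤ)
    (ga gb gc : ℤ × ℤ × ℤ → ℤ × ℤ)
    (hinj : Function.Injective (fun x => (ψ1 x, ψ2 x, ψ3 x)))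
    (ha : ∀ x y : ℤ × ℤ × ℤ, ga x = ga y → ψ2 x = ψ2 y ∧ ψ3 x = ψ3 y)
    (hb : ∀ x y : ℤ × ℤ × ℤ, gb x = gb y → ψ1 x = ψ1 y ∧ ψ3 x = ψ3 y)
    (hc : ∀ x y : ℤ × ℤ × ℤ, gc x = gc y → ψ1 x = ψ1 y ∧ ψ2 x = ψ2 y) :
    S.card ^ 2 ≤ (S.image ga).card * ((S.image gb).card * (S.image gc).card) := by
  classical
  set Φ : ℤ × ℤ × ℤ → ℤ × ℤ × ℤ := fun x => (ψ1 x, ψ2 x, ψ3 x) with hΦ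
  have h0 : S.card = (S.image Φ).card := (Finset.card_image_of_injective _ hinj).symm
  have h1 := lw (S.image Φ)
  rw [Finset.image_image, Finset.image_image, Finset.image_image] at h1
  have e23 : ((fun x : ℤ × ℤ × ℤ => (x.2.1, x.2.2)) ∘ Φ) = fun x => (ψ2 x, ψ3 x) := rfl
  have e13 : ((fun x : ℤ × ℤ × ℤ => (x.1, x.2.2)) ∘ Φ) = fun x => (ψ1 x, ψ3 x) := rfl
  have e12 : ((fun x : ℤ × ℤ × ℤ => (x.1, x.2.1)) ∘ Φ) = fun x => (ψ1 x, ψ2 x) := rfl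
  rw [e23, e13, e12] at h1
  have t23 : (S.image fun x => (ψ2 x, ψ3 x)).card ≤ (S.image ga).card :=
    image_card_le S ga _ (fun x _ y _ h => by
      obtain ⟨h2, h3⟩ := ha x y h; rw [h2, h3])
  have t13 : (S.image fun x => (ψ1 x, ψ3 x)).card ≤ (S.image gb).card :=
    image_card_le S gb _ (fun x _ y _ h => by
      obtain ⟨h2, h3⟩ := hb x y h; rw [h2, h3])
  have t12 : (S.image fun x => (ψ1 x, ψ2 x)).card ≤ (S.image gc).card :=
    image_card_le S gc _ (fun x _ y _ h => by
      obtain ⟨h2, h3⟩ := hc x y h; rw [h2, h3])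
  calc S.card ^ 2 = (S.image Φ).card ^ 2 := by rw [h0]
    _ ≤ _ := h1
    _ ≤ (S.image ga).card * ((S.image gb).card * (S.image gc).card) :=
        Nat.mul_le_mul t23 (Nat.mul_le_mul t13 t12)


def D12 : Finset (ℤ × ℤ × ℤ) :=
  {(1,1,0), (-1,-1,0), (1,-1,0), (-1,1,0), (1,0,1), (-1,0,-1), (1,0,-1), (-1,0,1),
   (0,1,1), (0,-1,-1), (0,1,-1), (0,-1,1)}

lemma sol12 (p1 p2 p3 : ℤ) (h : p1 ^ 2 + p2 ^ 2 + p3 ^ 2 = 2) : (p1, p2, p3) ∈ D12 := by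
  have b1 : 2 * p1 ≤ 3 ∧ -3 ≤ 2 * p1 := by
    constructor <;> nlinarith [sq_nonneg p2, sq_nonneg p3, sq_nonneg (p1 - 1), sq_nonneg (p1 + 1)]
  have b2 : 2 * p2 ≤ 3 ∧ -3 ≤ 2 * p2 := by
    constructor <;> nlinarith [sq_nonneg p1, sq_nonneg p3, sq_nonneg (p2 - 1), sq_nonneg (p2 + 1)]
  have b3 : 2 * p3 ≤ 3 ∧ -3 ≤ 2 * p3 := by
    constructor <;> nlinarith [sq_nonneg p1, sq_nonneg p2, sq_nonneg (p3 - 1), sq_nonneg (p3 + 1)]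
  have h1 : -1 ≤ p1 ∧ p1 ≤ 1 := by omega
  have h2 : -1 ≤ p2 ∧ p2 ≤ 1 := by omega
  have h3 : -1 ≤ p3 ∧ p3 ≤ 1 := by omega
  obtain ⟨h1a, h1b⟩ := h1; obtain ⟨h2a, h2b⟩ := h2; obtain ⟨h3a, h3b⟩ := h3
  interval_cases p1 <;> interval_cases p2 <;> interval_cases p3 <;> revert h <;> decide

lemma sum_D12 (F : ℤ × ℤ × ℤ → ℕ) :
    ∑ v ∈ D12, F v = F (1,1,0) + F (-1,-1,0) + F (1,-1,0) + F (-1,1,0) + F (1,0,1) +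
      F (-1,0,-1) + F (1,0,-1) + F (-1,0,1) + F (0,1,1) + F (0,-1,-1) + F (0,1,-1) +
      F (0,-1,1) := by
  show ∑ v ∈ ({(1,1,0), (-1,-1,0), (1,-1,0), (-1,1,0), (1,0,1), (-1,0,-1), (1,0,-1), (-1,0,1),
   (0,1,1), (0,-1,-1), (0,1,-1), (0,-1,1)} : Finset (ℤ × ℤ × ℤ)), F v = _
  rw [Finset.sum_insert (by decide), Finset.sum_insert (by decide),
    Finset.sum_insert (by decide), Finset.sum_insert (by decide),
    Finset.sum_insert (by decide), Finset.sum_insert (by decide),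
    Finset.sum_insert (by decide), Finset.sum_insert (by decide),
    Finset.sum_insert (by decide), Finset.sum_insert (by decide),
    Finset.sum_insert (by decide), Finset.sum_singleton]
  omega


lemma coef_lt : 2 * (18 * Real.pi) ^ ((1:ℝ)/3) < 3 * 2 ^ ((1:ℝ)/3) * Real.pi := by
  have e18 : ((18 * Real.pi) ^ ((1:ℝ)/3)) ^ (3:ℕ) = 18 * Real.pi := by
    rw [← Real.rpow_natCast ((18*Real.pi) ^ ((1:ℝ)/3)) 3, ← Real.rpow_mul (by positivity)]
    norm_num
  have e2c : ((2:ℝ) ^ ((1:ℝ)/3)) ^ (3:ℕ) = 2 := by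
    rw [← Real.rpow_natCast ((2:ℝ) ^ ((1:ℝ)/3)) 3, ← Real.rpow_mul (by norm_num)]
    norm_num
  have h3 : (2 * (18 * Real.pi) ^ ((1:ℝ)/3)) ^ (3:ℕ) < (3 * 2 ^ ((1:ℝ)/3) * Real.pi) ^ (3:ℕ) := by
    rw [mul_pow, mul_pow, mul_pow, e18, e2c]
    have h9 : Real.pi ^ 2 > 9 := by nlinarith [Real.pi_gt_three]
    nlinarith [h9, Real.pi_gt_three, Real.pi_pos]
  exact lt_of_pow_lt_pow_left₀ 3 (by positivity) h3

lemma final {Cr nr Sg t G c3 pr : ℝ} (h1 : Cr + 2 * Sg ≤ 12 * nr)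
    (h2 : 9 * (c3 * t) ≤ 2 * Sg) (h3 : 2 * G < 3 * c3 * pr)
    (hpr : 0 < pr) (ht : 0 < t) : Cr < 2 * (6 * nr - 3 * G / pr * t) := by
  have u1 : 3 * t * (2 * G) < 3 * t * (3 * c3 * pr) :=
    mul_lt_mul_of_pos_left h3 (by positivity)
  have u2 : pr * (9 * (c3 * t)) ≤ pr * (2 * Sg) :=
    mul_le_mul_of_nonneg_left h2 (le_of_lt hpr)
  have key : 6 * G * t < 2 * Sg * pr := by nlinarith [u1, u2]
  have e : 2 * (6 * nr - 3 * G / pr * t) = 12 * nr - (6 * G * t) / pr := by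
    field_simp; ring
  rw [e]
  have : (6 * G * t) / pr < 2 * Sg := by
    rw [div_lt_iff₀ hpr]; exact key
  linarith

lemma analytic (n C l1 l2 l3 l4 l5 l6 : ℕ) (hn : 2 ≤ n)
    (hl1 : 1 ≤ l1) (hl2 : 1 ≤ l2) (hl3 : 1 ≤ l3)
    (hl4 : 1 ≤ l4) (hl5 : 1 ≤ l5) (hl6 : 1 ≤ l6)
    (hmain : C + 2 * (l1 + l2 + l3 + l4 + l5 + l6) ≤ 12 * n)
    (h6 : n ^ 6 ≤ l4 * l5 * l6 * (l1 * l2 * l3) ^ 2) :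
    (C : ℝ) < 2 * (6 * n - 3 * (18 * Real.pi) ^ ((1 : ℝ) / 3) / Real.pi
      * (n : ℝ) ^ ((2 : ℝ) / 3)) := by
  have hπ := Real.pi_pos
  have hn0 : (0:ℝ) ≤ (n:ℝ) := Nat.cast_nonneg n
  have p1 : (0:ℝ) < (l1:ℝ) := by exact_mod_cast Nat.lt_of_lt_of_le Nat.zero_lt_one hl1
  have p2 : (0:ℝ) < (l2:ℝ) := by exact_mod_cast Nat.lt_of_lt_of_le Nat.zero_lt_one hl2
  have p3 : (0:ℝ) < (l3:ℝ) := by exact_mod_cast Nat.lt_of_lt_of_le Nat.zero_lt_one hl3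
  have p4 : (0:ℝ) < (l4:ℝ) := by exact_mod_cast Nat.lt_of_lt_of_le Nat.zero_lt_one hl4
  have p5 : (0:ℝ) < (l5:ℝ) := by exact_mod_cast Nat.lt_of_lt_of_le Nat.zero_lt_one hl5
  have p6 : (0:ℝ) < (l6:ℝ) := by exact_mod_cast Nat.lt_of_lt_of_le Nat.zero_lt_one hl6
  set t : ℝ := (n:ℝ) ^ ((2:ℝ)/3) with ht
  set A : ℝ := (l1:ℝ) * l2 * l3 with hA
  set B : ℝ := (l4:ℝ) * l5 * l6 with hB
  have hA0 : (0:ℝ) < A := by rw [hA]; positivity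
  have hB0 : (0:ℝ) < B := by rw [hB]; positivity
  have h6R : ((n:ℝ)) ^ (6:ℕ) ≤ B * A ^ 2 := by
    rw [hA, hB]; exact_mod_cast h6
  have e1 : t = ((n:ℝ) ^ (6:ℕ)) ^ ((1:ℝ)/9) := by
    rw [ht, ← Real.rpow_natCast (n:ℝ) 6, ← Real.rpow_mul hn0]; norm_num
  have step1 : t ≤ (B * A ^ 2) ^ ((1:ℝ)/9) := by
    rw [e1]; exact Real.rpow_le_rpow (by positivity) h6R (by norm_num)
  have e2 : (B * A ^ 2) ^ ((1:ℝ)/9) = B ^ ((1:ℝ)/9) * A ^ ((2:ℝ)/9) := by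
    rw [Real.mul_rpow (le_of_lt hB0) (by positivity), ← Real.rpow_natCast A 2,
      ← Real.rpow_mul (le_of_lt hA0)]
    norm_num
  have c3pos : (0:ℝ) < 2 ^ ((1:ℝ)/3) := by positivity
  have hg2 := Real.geom_mean_le_arith_mean2_weighted
    (by norm_num : (0:ℝ) ≤ 1/3) (by norm_num : (0:ℝ) ≤ 2/3)
    (p₁ := 2 * B ^ ((1:ℝ)/3)) (p₂ := A ^ ((1:ℝ)/3))
    (by positivity) (by positivity) (by norm_num)
  have e3 : (2 * B ^ ((1:ℝ)/3)) ^ ((1:ℝ)/3) * (A ^ ((1:ℝ)/3)) ^ ((2:ℝ)/3)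
      = 2 ^ ((1:ℝ)/3) * (B ^ ((1:ℝ)/9) * A ^ ((2:ℝ)/9)) := by
    rw [Real.mul_rpow (by norm_num) (by positivity), ← Real.rpow_mul (le_of_lt hB0),
      ← Real.rpow_mul (le_of_lt hA0)]
    norm_num
    ring
  rw [e3] at hg2
  have eA : A ^ ((1:ℝ)/3) = (l1:ℝ) ^ ((1:ℝ)/3) * (l2:ℝ) ^ ((1:ℝ)/3) * (l3:ℝ) ^ ((1:ℝ)/3) := by
    rw [hA, Real.mul_rpow (by positivity) (by positivity),
      Real.mul_rpow (by positivity) (by positivity)]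
  have eB : B ^ ((1:ℝ)/3) = (l4:ℝ) ^ ((1:ℝ)/3) * (l5:ℝ) ^ ((1:ℝ)/3) * (l6:ℝ) ^ ((1:ℝ)/3) := by
    rw [hB, Real.mul_rpow (by positivity) (by positivity),
      Real.mul_rpow (by positivity) (by positivity)]
  rw [eA, eB] at hg2
  have hg3A := Real.geom_mean_le_arith_mean3_weighted
    (by norm_num : (0:ℝ) ≤ 1/3) (by norm_num : (0:ℝ) ≤ 1/3) (by norm_num : (0:ℝ) ≤ 1/3)
    (le_of_lt p1) (le_of_lt p2) (le_of_lt p3) (by norm_num)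
  have hg3B := Real.geom_mean_le_arith_mean3_weighted
    (by norm_num : (0:ℝ) ≤ 1/3) (by norm_num : (0:ℝ) ≤ 1/3) (by norm_num : (0:ℝ) ≤ 1/3)
    (le_of_lt p4) (le_of_lt p5) (le_of_lt p6) (by norm_num)
  have m1 : 2 ^ ((1:ℝ)/3) * t ≤ 2 ^ ((1:ℝ)/3) * (B ^ ((1:ℝ)/9) * A ^ ((2:ℝ)/9)) :=
    mul_le_mul_of_nonneg_left (step1.trans_eq e2) (le_of_lt c3pos)
  have key1 : 9 * (2 ^ ((1:ℝ)/3) * t) ≤ 2 * ((l1:ℝ) + l2 + l3 + l4 + l5 + l6) := by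
    linarith [m1, hg2, hg3A, hg3B]
  have htpos : (0:ℝ) < t := by
    rw [ht]
    apply Real.rpow_pos_of_pos
    have h0n : (0:ℕ) < n := by omega
    exact_mod_cast h0n
  have hmainR : (C:ℝ) + 2 * ((l1:ℝ) + l2 + l3 + l4 + l5 + l6) ≤ 12 * n := by
    exact_mod_cast hmain
  have := final (Sg := (l1:ℝ) + l2 + l3 + l4 + l5 + l6) hmainR key1 coef_lt Real.pi_pos htpos
  rw [ht] at this
  exact this


end FccProof

open FccProof

/-- Upper bound for contact numbers of packings of `n ≥ 2` unit balls all of whose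
centers belong to the fcc lattice: fewer than `6n - (3·(18π)^(1/3)/π)·n^(2/3)`
touching pairs. -/
theorem contact_upper_bound_fcc (n : ℕ) (hn : 2 ≤ n)
    (P : Finset (EuclideanSpace ℝ (Fin 3))) (hsub : ↑P ⊆ fccLattice)
    (hcard : P.card = n)
    (hpack : ∀ x ∈ P, ∀ y ∈ P, x ≠ y → 2 ≤ dist x y) :
    (contactsOrdered P : ℝ) <
      2 * (6 * n - 3 * (18 * Real.pi) ^ ((1 : ℝ) / 3) / Real.pi * (n : ℝ) ^ ((2 : ℝ) / 3)) := by
  classical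
  -- integer coordinates
  set c : EuclideanSpace ℝ (Fin 3) → ℤ × ℤ × ℤ := fun v =>
    if h : v ∈ fccLattice then ((h.1 0).choose, (h.1 1).choose, (h.1 2).choose) else 0
    with hcdef
  have hcoord : ∀ v ∈ P, v 0 = ((c v).1 : ℝ) * Real.sqrt 2 ∧
      v 1 = ((c v).2.1 : ℝ) * Real.sqrt 2 ∧ v 2 = ((c v).2.2 : ℝ) * Real.sqrt 2 := by
    intro v hv
    have h : v ∈ fccLattice := hsub hv
    simp only [hcdef, dif_pos h]
    exact ⟨(h.1 0).choose_spec, (h.1 1).choose_spec, (h.1 2).choose_spec⟩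
  have hc_inj : Set.InjOn c ↑P := by
    intro v hv w hw hvw
    obtain ⟨h0v, h1v, h2v⟩ := hcoord v hv
    obtain ⟨h0w, h1w, h2w⟩ := hcoord w hw
    have hext : ∀ i : Fin 3, v i = w i := by
      intro i
      fin_cases i
      · show v 0 = w 0; rw [h0v, h0w, hvw]
      · show v 1 = w 1; rw [h1v, h1w, hvw]
      · show v 2 = w 2; rw [h2v, h2w, hvw]
    exact PiLp.ext hext
  -- the image in ℤ³
  set S : Finset (ℤ × ℤ × ℤ) := P.image c with hSdef
  have hS : S.card = n := by rw [hSdef, Finset.card_image_of_injOn hc_inj, hcard]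
  have hSne : S.Nonempty := by
    rw [← Finset.card_pos, hS]; omega
  -- distance 2 means difference is one of the 12 minimal vectors
  have hdist2 : ∀ v ∈ P, ∀ w ∈ P, dist v w = 2 → c w - c v ∈ D12 := by
    intro v hv w hw hd
    obtain ⟨h0v, h1v, h2v⟩ := hcoord v hv
    obtain ⟨h0w, h1w, h2w⟩ := hcoord w hw
    have hT0 : (0:ℝ) ≤ ∑ i, dist (v i) (w i) ^ 2 :=
      Finset.sum_nonneg fun i _ => sq_nonneg _
    have hT : ∑ i, dist (v i) (w i) ^ 2 = 4 := by
      have h4 : dist v w ^ 2 = 4 := by rw [hd]; norm_num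
      rw [EuclideanSpace.dist_eq, Real.sq_sqrt hT0] at h4
      exact h4
    rw [Fin.sum_univ_three] at hT
    have hs2 : Real.sqrt 2 ^ 2 = 2 := Real.sq_sqrt (by norm_num)
    have e0 : dist (v 0) (w 0) ^ 2 = ((((c w).1 - (c v).1 : ℤ) : ℝ) * Real.sqrt 2) ^ 2 := by
      rw [Real.dist_eq, sq_abs, h0v, h0w]; push_cast; ring
    have e1 : dist (v 1) (w 1) ^ 2 = ((((c w).2.1 - (c v).2.1 : ℤ) : ℝ) * Real.sqrt 2) ^ 2 := by
      rw [Real.dist_eq, sq_abs, h1v, h1w]; push_cast; ring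
    have e2 : dist (v 2) (w 2) ^ 2 = ((((c w).2.2 - (c v).2.2 : ℤ) : ℝ) * Real.sqrt 2) ^ 2 := by
      rw [Real.dist_eq, sq_abs, h2v, h2w]; push_cast; ring
    rw [e0, e1, e2] at hT
    have key : ((((c w).1 - (c v).1 : ℤ) : ℝ)) ^ 2 + ((((c w).2.1 - (c v).2.1 : ℤ) : ℝ)) ^ 2
        + ((((c w).2.2 - (c v).2.2 : ℤ) : ℝ)) ^ 2 = 2 := by
      nlinarith [hT, hs2, sq_nonneg (Real.sqrt 2)]
    have keyz : ((c w).1 - (c v).1) ^ 2 + ((c w).2.1 - (c v).2.1) ^ 2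
        + ((c w).2.2 - (c v).2.2) ^ 2 = 2 := by exact_mod_cast key
    have hmem := sol12 _ _ _ keyz
    have heq : c w - c v = ((c w).1 - (c v).1, (c w).2.1 - (c v).2.1,
        (c w).2.2 - (c v).2.2) := rfl
    rw [heq]
    exact hmem
  -- contacts decompose along the 12 vectors
  have hcontacts : contactsOrdered P ≤ ∑ v ∈ D12, (S.filter fun x => x + v ∈ S).card := by
    have hsubset : P.offDiag.filter (fun p => dist p.1 p.2 = 2) ⊆
        D12.biUnion fun v => P.offDiag.filter fun p => c p.2 - c p.1 = v := by
      intro p hp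
      obtain ⟨hpd, hd2⟩ := Finset.mem_filter.1 hp
      obtain ⟨hp1, hp2, -⟩ := Finset.mem_offDiag.1 hpd
      exact Finset.mem_biUnion.2 ⟨c p.2 - c p.1, hdist2 p.1 hp1 p.2 hp2 hd2,
        Finset.mem_filter.2 ⟨hpd, rfl⟩⟩
    have hFk : ∀ v ∈ D12, (P.offDiag.filter fun p => c p.2 - c p.1 = v).card ≤
        (S.filter fun x => x + v ∈ S).card := by
      intro v _
      apply Finset.card_le_card_of_injOn (fun p => c p.1)
      · intro p hp
        obtain ⟨hpd, hdv⟩ := Finset.mem_filter.1 hp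
        obtain ⟨hp1, hp2, -⟩ := Finset.mem_offDiag.1 hpd
        refine Finset.mem_filter.2 ⟨Finset.mem_image_of_mem c hp1, ?_⟩
        have : c p.1 + v = c p.2 := by rw [← hdv]; ring
        rw [this]
        exact Finset.mem_image_of_mem c hp2
      · intro p hp q hq hpq
        simp only [Finset.coe_filter, Set.mem_setOf_eq] at hp hq
        obtain ⟨hpd, hdvp⟩ := hp
        obtain ⟨hqd, hdvq⟩ := hq
        obtain ⟨hp1, hp2, -⟩ := Finset.mem_offDiag.1 hpd
        obtain ⟨hq1, hq2, -⟩ := Finset.mem_offDiag.1 hqd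
        have hpq' : c p.1 = c q.1 := hpq
        have e1 : p.1 = q.1 := hc_inj hp1 hq1 hpq'
        have e2 : c p.2 = c q.2 := by
          have hv1 : c p.2 = c p.1 + v := by rw [← hdvp]; ring
          have hv2 : c q.2 = c q.1 + v := by rw [← hdvq]; ring
          rw [hv1, hv2, hpq']
        exact Prod.ext e1 (hc_inj hp2 hq2 e2)
    calc contactsOrdered P ≤ (D12.biUnion fun v =>
          P.offDiag.filter fun p => c p.2 - c p.1 = v).card :=
        Finset.card_le_card hsubset
      _ ≤ ∑ v ∈ D12, (P.offDiag.filter fun p => c p.2 - c p.1 = v).card :=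
        Finset.card_biUnion_le
      _ ≤ ∑ v ∈ D12, (S.filter fun x => x + v ∈ S).card := Finset.sum_le_sum hFk
  rw [sum_D12 (fun v => (S.filter fun x => x + v ∈ S).card)] at hcontacts

  -- abbreviations for the six direction-projection image cardinalities
  -- line lemma, twelve instances
  have t1 : (S.filter fun x => x + (1,1,0) ∈ S).card
      + (S.image fun x : ℤ × ℤ × ℤ => (x.1 - x.2.1, x.2.2)).card ≤ n := by
    have h := line_lemma S (1,1,0) (fun x => (x.1 - x.2.1, x.2.2)) (fun x => x.1)
      (by rintro ⟨a,b,e⟩; show _ = _; simp only [Prod.mk_add_mk, Prod.mk.injEq]; omega)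
      (by rintro ⟨a,b,e⟩; show _ < _; simp only [Prod.mk_add_mk]; omega)
    rwa [hS] at h
  have t2 : (S.filter fun x => x + (-1,-1,0) ∈ S).card
      + (S.image fun x : ℤ × ℤ × ℤ => (x.1 - x.2.1, x.2.2)).card ≤ n := by
    have h := line_lemma S (-1,-1,0) (fun x => (x.1 - x.2.1, x.2.2)) (fun x => -x.1)
      (by rintro ⟨a,b,e⟩; show _ = _; simp only [Prod.mk_add_mk, Prod.mk.injEq]; omega)
      (by rintro ⟨a,b,e⟩; show _ < _; simp only [Prod.mk_add_mk]; omega)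
    rwa [hS] at h
  have t3 : (S.filter fun x => x + (1,-1,0) ∈ S).card
      + (S.image fun x : ℤ × ℤ × ℤ => (x.1 + x.2.1, x.2.2)).card ≤ n := by
    have h := line_lemma S (1,-1,0) (fun x => (x.1 + x.2.1, x.2.2)) (fun x => x.1)
      (by rintro ⟨a,b,e⟩; show _ = _; simp only [Prod.mk_add_mk, Prod.mk.injEq]; omega)
      (by rintro ⟨a,b,e⟩; show _ < _; simp only [Prod.mk_add_mk]; omega)
    rwa [hS] at h
  have t4 : (S.filter fun x => x + (-1,1,0) ∈ S).card
      + (S.image fun x : ℤ × ℤ × ℤ => (x.1 + x.2.1, x.2.2)).card ≤ n := by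
    have h := line_lemma S (-1,1,0) (fun x => (x.1 + x.2.1, x.2.2)) (fun x => -x.1)
      (by rintro ⟨a,b,e⟩; show _ = _; simp only [Prod.mk_add_mk, Prod.mk.injEq]; omega)
      (by rintro ⟨a,b,e⟩; show _ < _; simp only [Prod.mk_add_mk]; omega)
    rwa [hS] at h
  have t5 : (S.filter fun x => x + (1,0,1) ∈ S).card
      + (S.image fun x : ℤ × ℤ × ℤ => (x.1 - x.2.2, x.2.1)).card ≤ n := by
    have h := line_lemma S (1,0,1) (fun x => (x.1 - x.2.2, x.2.1)) (fun x => x.1)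
      (by rintro ⟨a,b,e⟩; show _ = _; simp only [Prod.mk_add_mk, Prod.mk.injEq]; omega)
      (by rintro ⟨a,b,e⟩; show _ < _; simp only [Prod.mk_add_mk]; omega)
    rwa [hS] at h
  have t6 : (S.filter fun x => x + (-1,0,-1) ∈ S).card
      + (S.image fun x : ℤ × ℤ × ℤ => (x.1 - x.2.2, x.2.1)).card ≤ n := by
    have h := line_lemma S (-1,0,-1) (fun x => (x.1 - x.2.2, x.2.1)) (fun x => -x.1)
      (by rintro ⟨a,b,e⟩; show _ = _; simp only [Prod.mk_add_mk, Prod.mk.injEq]; omega)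
      (by rintro ⟨a,b,e⟩; show _ < _; simp only [Prod.mk_add_mk]; omega)
    rwa [hS] at h
  have t7 : (S.filter fun x => x + (1,0,-1) ∈ S).card
      + (S.image fun x : ℤ × ℤ × ℤ => (x.1 + x.2.2, x.2.1)).card ≤ n := by
    have h := line_lemma S (1,0,-1) (fun x => (x.1 + x.2.2, x.2.1)) (fun x => x.1)
      (by rintro ⟨a,b,e⟩; show _ = _; simp only [Prod.mk_add_mk, Prod.mk.injEq]; omega)
      (by rintro ⟨a,b,e⟩; show _ < _; simp only [Prod.mk_add_mk]; omega)
    rwa [hS] at h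
  have t8 : (S.filter fun x => x + (-1,0,1) ∈ S).card
      + (S.image fun x : ℤ × ℤ × ℤ => (x.1 + x.2.2, x.2.1)).card ≤ n := by
    have h := line_lemma S (-1,0,1) (fun x => (x.1 + x.2.2, x.2.1)) (fun x => -x.1)
      (by rintro ⟨a,b,e⟩; show _ = _; simp only [Prod.mk_add_mk, Prod.mk.injEq]; omega)
      (by rintro ⟨a,b,e⟩; show _ < _; simp only [Prod.mk_add_mk]; omega)
    rwa [hS] at h
  have t9 : (S.filter fun x => x + (0,1,1) ∈ S).card
      + (S.image fun x : ℤ × ℤ × ℤ => (x.2.1 - x.2.2, x.1)).card ≤ n := by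
    have h := line_lemma S (0,1,1) (fun x => (x.2.1 - x.2.2, x.1)) (fun x => x.2.1)
      (by rintro ⟨a,b,e⟩; show _ = _; simp only [Prod.mk_add_mk, Prod.mk.injEq]; omega)
      (by rintro ⟨a,b,e⟩; show _ < _; simp only [Prod.mk_add_mk]; omega)
    rwa [hS] at h
  have t10 : (S.filter fun x => x + (0,-1,-1) ∈ S).card
      + (S.image fun x : ℤ × ℤ × ℤ => (x.2.1 - x.2.2, x.1)).card ≤ n := by
    have h := line_lemma S (0,-1,-1) (fun x => (x.2.1 - x.2.2, x.1)) (fun x => -x.2.1)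
      (by rintro ⟨a,b,e⟩; show _ = _; simp only [Prod.mk_add_mk, Prod.mk.injEq]; omega)
      (by rintro ⟨a,b,e⟩; show _ < _; simp only [Prod.mk_add_mk]; omega)
    rwa [hS] at h
  have t11 : (S.filter fun x => x + (0,1,-1) ∈ S).card
      + (S.image fun x : ℤ × ℤ × ℤ => (x.2.1 + x.2.2, x.1)).card ≤ n := by
    have h := line_lemma S (0,1,-1) (fun x => (x.2.1 + x.2.2, x.1)) (fun x => x.2.1)
      (by rintro ⟨a,b,e⟩; show _ = _; simp only [Prod.mk_add_mk, Prod.mk.injEq]; omega)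
      (by rintro ⟨a,b,e⟩; show _ < _; simp only [Prod.mk_add_mk]; omega)
    rwa [hS] at h
  have t12 : (S.filter fun x => x + (0,-1,1) ∈ S).card
      + (S.image fun x : ℤ × ℤ × ℤ => (x.2.1 + x.2.2, x.1)).card ≤ n := by
    have h := line_lemma S (0,-1,1) (fun x => (x.2.1 + x.2.2, x.1)) (fun x => -x.2.1)
      (by rintro ⟨a,b,e⟩; show _ = _; simp only [Prod.mk_add_mk, Prod.mk.injEq]; omega)
      (by rintro ⟨a,b,e⟩; show _ < _; simp only [Prod.mk_add_mk]; omega)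
    rwa [hS] at h
  -- Loomis-Whitney, three instances
  have lw1 : n ^ 2 ≤ (S.image fun x : ℤ × ℤ × ℤ => (x.1 + x.2.1, x.2.2)).card *
      ((S.image fun x : ℤ × ℤ × ℤ => (x.1 - x.2.1, x.2.2)).card *
       (S.image fun x : ℤ × ℤ × ℤ => (x.1 - x.2.2, x.2.1)).card) := by
    have h := lw_applied S (fun x => x.1 - x.2.1 - x.2.2) (fun x => -x.1 - x.2.1 + x.2.2)
      (fun x => x.2.2) (fun x => (x.1 + x.2.1, x.2.2)) (fun x => (x.1 - x.2.1, x.2.2))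
      (fun x => (x.1 - x.2.2, x.2.1))
      (by rintro ⟨a,b,e⟩ ⟨d,f,g⟩ h; simp only [Prod.mk.injEq] at h ⊢; omega)
      (by rintro ⟨a,b,e⟩ ⟨d,f,g⟩ h; simp only [Prod.mk.injEq] at h ⊢; omega)
      (by rintro ⟨a,b,e⟩ ⟨d,f,g⟩ h; simp only [Prod.mk.injEq] at h ⊢; omega)
      (by rintro ⟨a,b,e⟩ ⟨d,f,g⟩ h; simp only [Prod.mk.injEq] at h ⊢; omega)
    rwa [hS] at h
  have lw2 : n ^ 2 ≤ (S.image fun x : ℤ × ℤ × ℤ => (x.1 + x.2.2, x.2.1)).card *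
      ((S.image fun x : ℤ × ℤ × ℤ => (x.1 - x.2.2, x.2.1)).card *
       (S.image fun x : ℤ × ℤ × ℤ => (x.2.1 - x.2.2, x.1)).card) := by
    have h := lw_applied S (fun x => -x.1 - x.2.1 + x.2.2) (fun x => x.1 - x.2.1 + x.2.2)
      (fun x => x.2.1) (fun x => (x.1 + x.2.2, x.2.1)) (fun x => (x.1 - x.2.2, x.2.1))
      (fun x => (x.2.1 - x.2.2, x.1))
      (by rintro ⟨a,b,e⟩ ⟨d,f,g⟩ h; simp only [Prod.mk.injEq] at h ⊢; omega)
      (by rintro ⟨a,b,e⟩ ⟨d,f,g⟩ h; simp only [Prod.mk.injEq] at h ⊢; omega)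
      (by rintro ⟨a,b,e⟩ ⟨d,f,g⟩ h; simp only [Prod.mk.injEq] at h ⊢; omega)
      (by rintro ⟨a,b,e⟩ ⟨d,f,g⟩ h; simp only [Prod.mk.injEq] at h ⊢; omega)
    rwa [hS] at h
  have lw3 : n ^ 2 ≤ (S.image fun x : ℤ × ℤ × ℤ => (x.2.1 + x.2.2, x.1)).card *
      ((S.image fun x : ℤ × ℤ × ℤ => (x.2.1 - x.2.2, x.1)).card *
       (S.image fun x : ℤ × ℤ × ℤ => (x.1 - x.2.1, x.2.2)).card) := by
    have h := lw_applied S (fun x => -x.1 + x.2.1 - x.2.2) (fun x => x.1 - x.2.1 - x.2.2)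
      (fun x => x.1) (fun x => (x.2.1 + x.2.2, x.1)) (fun x => (x.2.1 - x.2.2, x.1))
      (fun x => (x.1 - x.2.1, x.2.2))
      (by rintro ⟨a,b,e⟩ ⟨d,f,g⟩ h; simp only [Prod.mk.injEq] at h ⊢; omega)
      (by rintro ⟨a,b,e⟩ ⟨d,f,g⟩ h; simp only [Prod.mk.injEq] at h ⊢; omega)
      (by rintro ⟨a,b,e⟩ ⟨d,f,g⟩ h; simp only [Prod.mk.injEq] at h ⊢; omega)
      (by rintro ⟨a,b,e⟩ ⟨d,f,g⟩ h; simp only [Prod.mk.injEq] at h ⊢; omega)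
    rwa [hS] at h
  -- nonemptiness of images
  have hL1 : 1 ≤ (S.image fun x : ℤ × ℤ × ℤ => (x.1 - x.2.1, x.2.2)).card :=
    Finset.card_pos.2 (hSne.image _)
  have hL2 : 1 ≤ (S.image fun x : ℤ × ℤ × ℤ => (x.1 - x.2.2, x.2.1)).card :=
    Finset.card_pos.2 (hSne.image _)
  have hL3 : 1 ≤ (S.image fun x : ℤ × ℤ × ℤ => (x.2.1 - x.2.2, x.1)).card :=
    Finset.card_pos.2 (hSne.image _)
  have hL4 : 1 ≤ (S.image fun x : ℤ × ℤ × ℤ => (x.1 + x.2.1, x.2.2)).card :=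
    Finset.card_pos.2 (hSne.image _)
  have hL5 : 1 ≤ (S.image fun x : ℤ × ℤ × ℤ => (x.1 + x.2.2, x.2.1)).card :=
    Finset.card_pos.2 (hSne.image _)
  have hL6 : 1 ≤ (S.image fun x : ℤ × ℤ × ℤ => (x.2.1 + x.2.2, x.1)).card :=
    Finset.card_pos.2 (hSne.image _)
  -- combine in ℕ
  have hmainN : contactsOrdered P +
      2 * ((S.image fun x : ℤ × ℤ × ℤ => (x.1 - x.2.1, x.2.2)).card
        + (S.image fun x : ℤ × ℤ × ℤ => (x.1 - x.2.2, x.2.1)).card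
        + (S.image fun x : ℤ × ℤ × ℤ => (x.2.1 - x.2.2, x.1)).card
        + (S.image fun x : ℤ × ℤ × ℤ => (x.1 + x.2.1, x.2.2)).card
        + (S.image fun x : ℤ × ℤ × ℤ => (x.1 + x.2.2, x.2.1)).card
        + (S.image fun x : ℤ × ℤ × ℤ => (x.2.1 + x.2.2, x.1)).card) ≤ 12 * n := by
    omega
  have h6N : n ^ 6 ≤ ((S.image fun x : ℤ × ℤ × ℤ => (x.1 + x.2.1, x.2.2)).card
        * (S.image fun x : ℤ × ℤ × ℤ => (x.1 + x.2.2, x.2.1)).card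
        * (S.image fun x : ℤ × ℤ × ℤ => (x.2.1 + x.2.2, x.1)).card)
      * ((S.image fun x : ℤ × ℤ × ℤ => (x.1 - x.2.1, x.2.2)).card
        * (S.image fun x : ℤ × ℤ × ℤ => (x.1 - x.2.2, x.2.1)).card
        * (S.image fun x : ℤ × ℤ × ℤ => (x.2.1 - x.2.2, x.1)).card) ^ 2 := by
    calc n ^ 6 = n ^ 2 * n ^ 2 * n ^ 2 := by ring
      _ ≤ _ := Nat.mul_le_mul (Nat.mul_le_mul lw1 lw2) lw3
      _ = _ := by ring
  exact analytic n (contactsOrdered P) _ _ _ _ _ _ hn hL1 hL2 hL3 hL4 hL5 hL6 hmainN h6N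
end
end

section
/- For every integer k ≥ 2, setting n = k(2k²+1)/3, there is an n-point subset of the face-centered cubic lattice (minimal distance 2) whose number of pairs at distance exactly 2 equals 2k(2k²−3k+1), and moreover 2k(2k²−3k+1) > 6n − 486^(1/3)·n^(2/3). -/
open scoped Classical

noncomputable section

-- (assume s1 contents; re-paste minimal needed)
abbrev V3 := ℤ × ℤ × ℤ
def cc (k : ℕ) : ℤ := if Even k then 1 else 0
def okP (k : ℕ) (v : V3) : Prop :=
  (v.1 + v.2.1 + v.2.2) % 2 = 0 ∧
  ((v.1 - cc k).natAbs : ℤ) + (v.2.1.natAbs : ℤ) + (v.2.2.natAbs : ℤ) ≤ (k : ℤ) - 1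
instance (k : ℕ) (v : V3) : Decidable (okP k v) := by unfold okP; infer_instance
def Om (k : ℕ) : Finset V3 :=
  (Finset.Icc ((-(k:ℤ), -(k:ℤ), -(k:ℤ)) : V3) ((k:ℤ), (k:ℤ), (k:ℤ))).filter (okP k)
lemma cc01 (k : ℕ) : cc k = 0 ∨ cc k = 1 := by unfold cc; split <;> simp
lemma cc_par (k : ℕ) : (cc k + k) % 2 = 1 := by
  unfold cc; split
  · next h => rw [Nat.even_iff] at h; omega
  · next h => rw [Nat.even_iff] at h; omega
lemma mem_Om {k : ℕ} {v : V3} : v ∈ Om k ↔ okP k v := by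
  unfold Om
  rw [Finset.mem_filter, and_iff_right_iff_imp]
  intro h
  rw [Finset.mem_Icc]
  obtain ⟨h1, h2⟩ := h
  have := cc01 k
  constructor <;> constructor <;> simp <;> try constructor
  all_goals omega
def grid (B : ℤ) : Finset ℤ := (Finset.Icc 0 B).image (fun j => 2*j - B)
def grid' (B : ℤ) : Finset ℤ := (Finset.Icc 0 (B-1)).image (fun j => 2*j - B)
lemma mem_grid {B s : ℤ} : s ∈ grid B ↔ (-B ≤ s ∧ s ≤ B ∧ (s + B) % 2 = 0) := by
  simp only [grid, Finset.mem_image, Finset.mem_Icc]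
  constructor
  · rintro ⟨j, h, rfl⟩; omega
  · intro h; exact ⟨(s+B)/2, by omega, by omega⟩
lemma mem_grid' {B s : ℤ} : s ∈ grid' B ↔ (-B ≤ s ∧ s ≤ B - 2 ∧ (s + B) % 2 = 0) := by
  simp only [grid', Finset.mem_image, Finset.mem_Icc]
  constructor
  · rintro ⟨j, h, rfl⟩; omega
  · intro h; exact ⟨(s+B)/2, by omega, by omega⟩
lemma card_grid {B : ℤ} (hB : 0 ≤ B) : ((grid B).card : ℤ) = B + 1 := by
  unfold grid
  rw [Finset.card_image_of_injective _ (fun a b h => by omega), Int.card_Icc]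
  omega
lemma card_grid' {B : ℤ} (hB : 0 ≤ B) : ((grid' B).card : ℤ) = B := by
  unfold grid'
  rw [Finset.card_image_of_injective _ (fun a b h => by omega), Int.card_Icc]
  omega

-- NEW: layer parameter
def BB (k : ℕ) (z : ℤ) : ℤ := (k:ℤ) - 1 - (z.natAbs : ℤ)

def zrange (k : ℕ) : Finset ℤ := Finset.Icc (-((k:ℤ)-1)) ((k:ℤ)-1)

lemma card_Om (k : ℕ) : (Om k).card =
    ((zrange k).sigma (fun z => grid (BB k z) ×ˢ grid (BB k z))).card := by
  have hp := cc_par k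
  refine Finset.card_bij'
    (fun v _ => ⟨v.2.2, (v.1 - cc k + v.2.1, v.1 - cc k - v.2.1)⟩)
    (fun p _ => (cc k + (p.2.1 + p.2.2)/2, (p.2.1 - p.2.2)/2, p.1)) ?_ ?_ ?_ ?_
  · rintro ⟨x, y, z⟩ hv
    simp only [mem_Om, okP, Finset.mem_sigma, Finset.mem_product, mem_grid, zrange,
      Finset.mem_Icc, BB, Prod.mk.injEq, and_true, true_and] at hv ⊢
    omega
  · rintro ⟨z, s, t⟩ hp2
    simp only [mem_Om, okP, Finset.mem_sigma, Finset.mem_product, mem_grid, zrange,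
      Finset.mem_Icc, BB] at hp2 ⊢
    omega
  · rintro ⟨x, y, z⟩ hv
    simp only [mem_Om, okP] at hv
    simp only [Prod.mk.injEq, and_true, true_and]
    omega
  · rintro ⟨z, s, t⟩ hp2
    simp only [Finset.mem_sigma, Finset.mem_product, mem_grid, zrange,
      Finset.mem_Icc, BB] at hp2
    simp only [Sigma.mk.inj_iff, Prod.mk.injEq, heq_eq_eq, and_true, true_and]
    omega

def delta0 : V3 := (1, 1, 0)

def OmP (k : ℕ) : Finset V3 := (Om k).filter (fun v => v + delta0 ∈ Om k)

lemma mem_OmP {k : ℕ} {v : V3} : v ∈ OmP k ↔ okP k v ∧ okP k (v + delta0) := by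
  rw [OmP, Finset.mem_filter, mem_Om, mem_Om]

lemma card_OmP (k : ℕ) : (OmP k).card =
    ((zrange k).sigma (fun z => grid' (BB k z) ×ˢ grid (BB k z))).card := by
  have hp := cc_par k
  refine Finset.card_bij'
    (fun v _ => ⟨v.2.2, (v.1 - cc k + v.2.1, v.1 - cc k - v.2.1)⟩)
    (fun p _ => (cc k + (p.2.1 + p.2.2)/2, (p.2.1 - p.2.2)/2, p.1)) ?_ ?_ ?_ ?_
  · rintro ⟨x, y, z⟩ hv
    simp only [mem_OmP, okP, delta0, Prod.mk_add_mk, Finset.mem_sigma, Finset.mem_product,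
      mem_grid, mem_grid', zrange, Finset.mem_Icc, BB] at hv ⊢
    omega
  · rintro ⟨z, s, t⟩ hp2
    simp only [Finset.mem_sigma, Finset.mem_product, mem_grid, mem_grid', zrange,
      Finset.mem_Icc, BB] at hp2
    simp only [mem_OmP, okP, delta0, Prod.mk_add_mk]
    omega
  · rintro ⟨x, y, z⟩ hv
    simp only [mem_OmP, okP] at hv
    simp only [Prod.mk.injEq, and_true, true_and]
    omega
  · rintro ⟨z, s, t⟩ hp2
    simp only [Finset.mem_sigma, Finset.mem_product, mem_grid, mem_grid', zrange,
      Finset.mem_Icc, BB] at hp2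
    simp only [Sigma.mk.inj_iff, Prod.mk.injEq, heq_eq_eq, and_true, true_and]
    omega

lemma insert_Icc_top (a b : ℤ) (h : a ≤ b + 1) :
    Finset.Icc a (b+1) = insert (b+1) (Finset.Icc a b) := by
  ext x; simp only [Finset.mem_Icc, Finset.mem_insert]; omega

lemma insert_Icc_sym (r : ℕ) :
    Finset.Icc (-((r:ℤ)+1)) ((r:ℤ)+1)
      = insert (-((r:ℤ)+1)) (insert ((r:ℤ)+1) (Finset.Icc (-(r:ℤ)) (r:ℤ))) := by
  ext x; simp only [Finset.mem_Icc, Finset.mem_insert]; omega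

lemma sum_Icc_sym (g : ℤ → ℤ) : ∀ r : ℕ,
    ∑ z ∈ Finset.Icc (-(r:ℤ)) (r:ℤ), g z
      = g 0 + ∑ j ∈ Finset.Icc (1:ℤ) (r:ℤ), (g j + g (-j))
  | 0 => by simp
  | (r+1) => by
    have h1 : ((r:ℤ)+1) ∉ Finset.Icc (-(r:ℤ)) (r:ℤ) := by simp only [Finset.mem_Icc, Finset.mem_insert]; omega
    have h2 : (-((r:ℤ)+1)) ∉ insert ((r:ℤ)+1) (Finset.Icc (-(r:ℤ)) (r:ℤ)) := by
      simp only [Finset.mem_Icc, Finset.mem_insert]; omega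
    push_cast
    rw [insert_Icc_sym r, Finset.sum_insert h2, Finset.sum_insert h1,
      insert_Icc_top 1 r (by omega), Finset.sum_insert (by simp only [Finset.mem_Icc, Finset.mem_insert]; omega)]
    have := sum_Icc_sym g r
    push_cast at this
    omega

lemma refl_Icc (h : ℤ → ℤ) (r : ℤ) :
    ∑ j ∈ Finset.Icc (1:ℤ) r, h j = ∑ j ∈ Finset.Icc (1:ℤ) r, h (r+1-j) := by
  apply Finset.sum_nbij' (fun j => r+1-j) (fun j => r+1-j) <;>
    simp [Finset.mem_Icc] <;> omega

lemma six_sum_sq : ∀ r : ℕ, 6 * ∑ i ∈ Finset.Icc (1:ℤ) (r:ℤ), i^2 = r*(r+1)*(2*r+1)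
  | 0 => by simp
  | (r+1) => by
    push_cast
    rw [insert_Icc_top 1 r (by omega), Finset.sum_insert (by simp only [Finset.mem_Icc, Finset.mem_insert]; omega)]
    have := six_sum_sq r
    push_cast at this
    ring_nf
    ring_nf at this
    nlinarith [this]

lemma two_sum_lin : ∀ r : ℕ, 2 * ∑ i ∈ Finset.Icc (1:ℤ) (r:ℤ), i = r*(r+1)
  | 0 => by simp
  | (r+1) => by
    push_cast
    rw [insert_Icc_top 1 r (by omega), Finset.sum_insert (by simp only [Finset.mem_Icc, Finset.mem_insert]; omega)]
    have := two_sum_lin r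
    push_cast at this
    ring_nf
    ring_nf at this
    nlinarith [this]

lemma card_Om_val (k : ℕ) (hk : 1 ≤ k) : 3 * ((Om k).card : ℤ) = (k:ℤ) * (2*(k:ℤ)^2 + 1) := by
  obtain ⟨r, rfl⟩ : ∃ r:ℕ, k = r + 1 := ⟨k-1, by omega⟩
  rw [card_Om, Finset.card_sigma]
  have hzr : zrange (r+1) = Finset.Icc (-(r:ℤ)) (r:ℤ) := by
    unfold zrange; push_cast; norm_num
  rw [hzr]
  push_cast [-Int.natCast_natAbs]
  rw [Finset.sum_congr rfl (g := fun z => ((r:ℤ) - (z.natAbs:ℤ) + 1)^2) (fun z hz => by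
    rw [Finset.mem_Icc] at hz
    have hB : (0:ℤ) ≤ BB (r+1) z := by unfold BB; push_cast [-Int.natCast_natAbs]; omega
    push_cast [Finset.card_product, -Int.natCast_natAbs]
    rw [card_grid hB]
    unfold BB
    push_cast [-Int.natCast_natAbs]
    ring)]
  rw [sum_Icc_sym (fun z => ((r:ℤ) - (z.natAbs:ℤ) + 1)^2) r]
  rw [Finset.sum_congr rfl (g := fun j => 2 * ((r:ℤ) - j + 1)^2) (fun j hj => by
    rw [Finset.mem_Icc] at hj
    have h1 : ((j.natAbs : ℤ)) = j := by omega
    have h2 : (((-j).natAbs : ℤ)) = j := by omega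
    rw [h1, h2]
    ring)]
  rw [refl_Icc (fun j => 2 * ((r:ℤ) - j + 1)^2) r]
  rw [Finset.sum_congr rfl (g := fun j => 2 * j^2) (fun j hj => by ring)]
  rw [← Finset.mul_sum]
  have h6 := six_sum_sq r
  simp only [Int.natAbs_zero, Nat.cast_zero]
  linear_combination h6

lemma card_OmP_val (k : ℕ) (hk : 1 ≤ k) :
    3 * ((OmP k).card : ℤ) = (k:ℤ) * ((k:ℤ) - 1) * (2*(k:ℤ) - 1) := by
  obtain ⟨r, rfl⟩ : ∃ r:ℕ, k = r + 1 := ⟨k-1, by omega⟩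
  rw [card_OmP, Finset.card_sigma]
  have hzr : zrange (r+1) = Finset.Icc (-(r:ℤ)) (r:ℤ) := by
    unfold zrange; push_cast; norm_num
  rw [hzr]
  push_cast [-Int.natCast_natAbs]
  rw [Finset.sum_congr rfl
    (g := fun z => ((r:ℤ) - (z.natAbs:ℤ)) * ((r:ℤ) - (z.natAbs:ℤ) + 1)) (fun z hz => by
    rw [Finset.mem_Icc] at hz
    have hB : (0:ℤ) ≤ BB (r+1) z := by unfold BB; push_cast [-Int.natCast_natAbs]; omega
    push_cast [Finset.card_product, -Int.natCast_natAbs]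
    rw [card_grid hB, card_grid' hB]
    unfold BB
    push_cast [-Int.natCast_natAbs]
    ring)]
  rw [sum_Icc_sym (fun z => ((r:ℤ) - (z.natAbs:ℤ)) * ((r:ℤ) - (z.natAbs:ℤ) + 1)) r]
  rw [Finset.sum_congr rfl (g := fun j => 2 * (((r:ℤ) - j) * ((r:ℤ) - j + 1))) (fun j hj => by
    rw [Finset.mem_Icc] at hj
    have h1 : ((j.natAbs : ℤ)) = j := by omega
    have h2 : (((-j).natAbs : ℤ)) = j := by omega
    rw [h1, h2]
    ring)]
  rw [refl_Icc (fun j => 2 * (((r:ℤ) - j) * ((r:ℤ) - j + 1))) r]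
  rw [Finset.sum_congr rfl (g := fun j => 2 * j^2 - 2 * j) (fun j hj => by ring)]
  rw [Finset.sum_sub_distrib, ← Finset.mul_sum, ← Finset.mul_sum]
  have h6 := six_sum_sq r
  have hl := two_sum_lin r
  simp only [Int.natAbs_zero, Nat.cast_zero]
  linear_combination h6 - 3 * hl

def Qf (w : V3) : ℤ := w.1^2 + w.2.1^2 + w.2.2^2

def Dset : Finset V3 :=
  {(1,1,0), (1,-1,0), (-1,1,0), (-1,-1,0), (1,0,1), (1,0,-1), (-1,0,1), (-1,0,-1),
   (0,1,1), (0,1,-1), (0,-1,1), (0,-1,-1)}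

lemma card_Dset : Dset.card = 12 := by decide

lemma Q_of_Dset {δ : V3} (h : δ ∈ Dset) : Qf δ = 2 := by
  fin_cases h <;> decide

lemma ne_zero_of_Dset {δ : V3} (h : δ ∈ Dset) : δ ≠ 0 := by
  fin_cases h <;> decide

lemma Q_char {w : V3} (h : Qf w = 2) : w ∈ Dset := by
  obtain ⟨a, b, c⟩ := w
  simp only [Qf] at h
  have ha : -1 ≤ a ∧ a ≤ 1 := by constructor <;> nlinarith [sq_nonneg b, sq_nonneg c]
  have hb : -1 ≤ b ∧ b ≤ 1 := by constructor <;> nlinarith [sq_nonneg a, sq_nonneg c]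
  have hc : -1 ≤ c ∧ c ≤ 1 := by constructor <;> nlinarith [sq_nonneg a, sq_nonneg b]
  obtain ⟨ha1, ha2⟩ := ha
  obtain ⟨hb1, hb2⟩ := hb
  obtain ⟨hc1, hc2⟩ := hc
  interval_cases a <;> interval_cases b <;> interval_cases c <;> simp_all <;> decide

def Mset (k : ℕ) (δ : V3) : Finset V3 := (Om k).filter (fun v => v + δ ∈ Om k)

lemma mem_Mset {k : ℕ} {δ v : V3} : v ∈ Mset k δ ↔ okP k v ∧ okP k (v + δ) := by
  simp [Mset, Finset.mem_filter, mem_Om]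

def Sset (k : ℕ) : Finset (V3 × V3) :=
  (Om k).offDiag.filter (fun p => Qf (p.1 - p.2) = 2)

lemma Sset_eq (k : ℕ) :
    Sset k = Dset.biUnion (fun δ => (Mset k δ).image (fun v => (v + δ, v))) := by
  ext ⟨p, q⟩
  simp only [Sset, Finset.mem_filter, Finset.mem_offDiag, Finset.mem_biUnion, Finset.mem_image,
    mem_Mset, mem_Om]
  constructor
  · rintro ⟨⟨hp, hq, hne⟩, hQ⟩
    exact ⟨p - q, Q_char hQ, q, ⟨hq, by simpa using hp⟩, by simp⟩
  · rintro ⟨δ, hδ, v, ⟨h1, h2⟩, heq⟩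
    obtain ⟨rfl, rfl⟩ : p = v + δ ∧ q = v := by
      constructor <;> [exact (congrArg Prod.fst heq).symm; exact (congrArg Prod.snd heq).symm]
    refine ⟨⟨h2, h1, ?_⟩, by simpa using Q_of_Dset hδ⟩
    intro hEq
    exact ne_zero_of_Dset hδ (add_eq_left.mp hEq)

lemma card_Sset (k : ℕ) : (Sset k).card = ∑ δ ∈ Dset, (Mset k δ).card := by
  rw [Sset_eq, Finset.card_biUnion, Finset.sum_congr rfl]
  · intro δ _
    exact Finset.card_image_of_injective _ (fun a b h => by
      simpa using (congrArg Prod.snd h))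
  · intro δ _ δ' _ hne
    simp only [Finset.disjoint_left, Finset.mem_image]
    rintro p ⟨v, _, rfl⟩ ⟨w, _, hw⟩
    obtain ⟨h1, h2⟩ : w + δ' = v + δ ∧ w = v := by
      exact ⟨congrArg Prod.fst hw, congrArg Prod.snd hw⟩
    apply hne
    subst h2
    exact (add_left_cancel h1).symm

lemma Mset_card_of (k : ℕ) (δ δ' : V3) (f g : V3 → V3)
    (hf : ∀ v ∈ Mset k δ, f v ∈ Mset k δ')
    (hg : ∀ v ∈ Mset k δ', g v ∈ Mset k δ)
    (hfg : ∀ v, g (f v) = v) (hgf : ∀ v, f (g v) = v) :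
    (Mset k δ).card = (Mset k δ').card :=
  Finset.card_nbij' f g hf hg (fun a _ => hfg a) (fun a _ => hgf a)

set_option maxHeartbeats 3000000 in
lemma Mset_card_eq (k : ℕ) {δ : V3} (hδ : δ ∈ Dset) :
    (Mset k δ).card = (Mset k delta0).card := by
  simp only [Dset, Finset.mem_insert, Finset.mem_singleton] at hδ
  rcases hδ with rfl|rfl|rfl|rfl|rfl|rfl|rfl|rfl|rfl|rfl|rfl|rfl
  · rfl
  · -- (1,-1,0) : f (x,y,z) = (x,-y,z)
    exact Mset_card_of k _ _ (fun v => (v.1, -v.2.1, v.2.2)) (fun v => (v.1, -v.2.1, v.2.2))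
      (by rintro ⟨x,y,z⟩ hv; simp only [mem_Mset, okP, delta0, Prod.mk_add_mk] at hv ⊢; omega)
      (by rintro ⟨x,y,z⟩ hv; simp only [mem_Mset, okP, delta0, Prod.mk_add_mk] at hv ⊢; omega)
      (by rintro ⟨x,y,z⟩; simp) (by rintro ⟨x,y,z⟩; simp)
  · -- (-1,1,0) : f (x,y,z) = (2c-x, y, z)
    exact Mset_card_of k _ _ (fun v => (2*cc k - v.1, v.2.1, v.2.2))
      (fun v => (2*cc k - v.1, v.2.1, v.2.2))
      (by rintro ⟨x,y,z⟩ hv; simp only [mem_Mset, okP, delta0, Prod.mk_add_mk] at hv ⊢; omega)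
      (by rintro ⟨x,y,z⟩ hv; simp only [mem_Mset, okP, delta0, Prod.mk_add_mk] at hv ⊢; omega)
      (by rintro ⟨x,y,z⟩; simp) (by rintro ⟨x,y,z⟩; simp)
  · -- (-1,-1,0) : f v = v + (-1,-1,0) maps to Mset delta0? f : Mset (-1,-1,0) → Mset (1,1,0), v ↦ v + (-1,-1,0)
    exact Mset_card_of k _ _ (fun v => (v.1 - 1, v.2.1 - 1, v.2.2))
      (fun v => (v.1 + 1, v.2.1 + 1, v.2.2))
      (by rintro ⟨x,y,z⟩ hv; simp only [mem_Mset, okP, delta0, Prod.mk_add_mk] at hv ⊢; omega)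
      (by rintro ⟨x,y,z⟩ hv; simp only [mem_Mset, okP, delta0, Prod.mk_add_mk] at hv ⊢; omega)
      (by rintro ⟨x,y,z⟩; simp) (by rintro ⟨x,y,z⟩; simp)
  · -- (1,0,1) : f (x,y,z) = (x,z,y)
    exact Mset_card_of k _ _ (fun v => (v.1, v.2.2, v.2.1)) (fun v => (v.1, v.2.2, v.2.1))
      (by rintro ⟨x,y,z⟩ hv; simp only [mem_Mset, okP, delta0, Prod.mk_add_mk] at hv ⊢; omega)
      (by rintro ⟨x,y,z⟩ hv; simp only [mem_Mset, okP, delta0, Prod.mk_add_mk] at hv ⊢; omega)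
      (by rintro ⟨x,y,z⟩; simp) (by rintro ⟨x,y,z⟩; simp)
  · -- (1,0,-1) : f : Mset (1,0,-1) → Mset δ0, g (x,y,z) = (x,z,-y), f (x,y,z) = (x,-z,y)
    exact Mset_card_of k _ _ (fun v => (v.1, -v.2.2, v.2.1)) (fun v => (v.1, v.2.2, -v.2.1))
      (by rintro ⟨x,y,z⟩ hv; simp only [mem_Mset, okP, delta0, Prod.mk_add_mk] at hv ⊢; omega)
      (by rintro ⟨x,y,z⟩ hv; simp only [mem_Mset, okP, delta0, Prod.mk_add_mk] at hv ⊢; omega)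
      (by rintro ⟨x,y,z⟩; simp) (by rintro ⟨x,y,z⟩; simp)
  · -- (-1,0,1) : f (x,y,z) = (2c-x, z, y)
    exact Mset_card_of k _ _ (fun v => (2*cc k - v.1, v.2.2, v.2.1))
      (fun v => (2*cc k - v.1, v.2.2, v.2.1))
      (by rintro ⟨x,y,z⟩ hv; simp only [mem_Mset, okP, delta0, Prod.mk_add_mk] at hv ⊢; omega)
      (by rintro ⟨x,y,z⟩ hv; simp only [mem_Mset, okP, delta0, Prod.mk_add_mk] at hv ⊢; omega)
      (by rintro ⟨x,y,z⟩; simp) (by rintro ⟨x,y,z⟩; simp)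
  · -- (-1,0,-1) : f (x,y,z) = (2c-x, -z, y), g (x,y,z) = (2c-x, z, -y)
    exact Mset_card_of k _ _ (fun v => (2*cc k - v.1, -v.2.2, v.2.1))
      (fun v => (2*cc k - v.1, v.2.2, -v.2.1))
      (by rintro ⟨x,y,z⟩ hv; simp only [mem_Mset, okP, delta0, Prod.mk_add_mk] at hv ⊢; omega)
      (by rintro ⟨x,y,z⟩ hv; simp only [mem_Mset, okP, delta0, Prod.mk_add_mk] at hv ⊢; omega)
      (by rintro ⟨x,y,z⟩; simp) (by rintro ⟨x,y,z⟩; simp)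
  · -- (0,1,1) : difference δ0=(1,1,0) ↦ (0,1,1) under A=cyclic x→y→z→x? we need f : Mset (0,1,1) → Mset δ0.
    -- inverse of earlier: g (x,y,z) = (z + c, x - c, y) maps Mset δ0 → Mset (0,1,1).
    -- f (x,y,z) = (y + c, z, x - c)
    exact Mset_card_of k _ _ (fun v => (v.2.1 + cc k, v.2.2, v.1 - cc k))
      (fun v => (v.2.2 + cc k, v.1 - cc k, v.2.1))
      (by rintro ⟨x,y,z⟩ hv; simp only [mem_Mset, okP, delta0, Prod.mk_add_mk] at hv ⊢; omega)
      (by rintro ⟨x,y,z⟩ hv; simp only [mem_Mset, okP, delta0, Prod.mk_add_mk] at hv ⊢; omega)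
      (by rintro ⟨x,y,z⟩; simp) (by rintro ⟨x,y,z⟩; simp)
  · -- (0,1,-1) : g (x,y,z) = (z + c, x - c, -y) maps Mset δ0 → Mset (0,1,-1); f inverse: (y+c, -z, x-c)
    exact Mset_card_of k _ _ (fun v => (v.2.1 + cc k, -v.2.2, v.1 - cc k))
      (fun v => (v.2.2 + cc k, v.1 - cc k, -v.2.1))
      (by rintro ⟨x,y,z⟩ hv; simp only [mem_Mset, okP, delta0, Prod.mk_add_mk] at hv ⊢; omega)
      (by rintro ⟨x,y,z⟩ hv; simp only [mem_Mset, okP, delta0, Prod.mk_add_mk] at hv ⊢; omega)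
      (by rintro ⟨x,y,z⟩; simp) (by rintro ⟨x,y,z⟩; simp)
  · -- (0,-1,1) : g (x,y,z) = (z + c, -(x - c), y) : Mset δ0 → Mset (0,-1,1); f : (cc - y, z, x - c)?
    exact Mset_card_of k _ _ (fun v => (cc k - v.2.1, v.2.2, v.1 - cc k))
      (fun v => (v.2.2 + cc k, cc k - v.1, v.2.1))
      (by rintro ⟨x,y,z⟩ hv; simp only [mem_Mset, okP, delta0, Prod.mk_add_mk] at hv ⊢; omega)
      (by rintro ⟨x,y,z⟩ hv; simp only [mem_Mset, okP, delta0, Prod.mk_add_mk] at hv ⊢; omega)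
      (by rintro ⟨x,y,z⟩; simp) (by rintro ⟨x,y,z⟩; simp)
  · -- (0,-1,-1) : g (x,y,z) = (z + c, -(x-c), -y); f : (cc - y, -z, x - c)
    exact Mset_card_of k _ _ (fun v => (cc k - v.2.1, -v.2.2, v.1 - cc k))
      (fun v => (v.2.2 + cc k, cc k - v.1, -v.2.1))
      (by rintro ⟨x,y,z⟩ hv; simp only [mem_Mset, okP, delta0, Prod.mk_add_mk] at hv ⊢; omega)
      (by rintro ⟨x,y,z⟩ hv; simp only [mem_Mset, okP, delta0, Prod.mk_add_mk] at hv ⊢; omega)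
      (by rintro ⟨x,y,z⟩; simp) (by rintro ⟨x,y,z⟩; simp)

lemma card_Sset_val (k : ℕ) : (Sset k).card = 12 * (OmP k).card := by
  rw [card_Sset]
  rw [Finset.sum_congr rfl (g := fun δ => (Mset k delta0).card) (fun δ hδ => Mset_card_eq k hδ)]
  rw [Finset.sum_const, card_Dset]
  rfl

def emb (v : V3) : EuclideanSpace ℝ (Fin 3) :=
  WithLp.toLp 2 ![(v.1 : ℝ) * Real.sqrt 2, (v.2.1 : ℝ) * Real.sqrt 2, (v.2.2 : ℝ) * Real.sqrt 2]

lemma emb_inj : Function.Injective emb := by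
  rintro ⟨a,b,c⟩ ⟨d,e,f⟩ h
  have h2 : Real.sqrt 2 ≠ 0 := by positivity
  have h0 := congrFun (congrArg WithLp.ofLp h) 0
  have h1 := congrFun (congrArg WithLp.ofLp h) 1
  have h3 := congrFun (congrArg WithLp.ofLp h) 2
  simp only [emb, WithLp.ofLp_toLp, Matrix.cons_val_zero, Matrix.cons_val_one, Matrix.head_cons,
    Matrix.cons_val_two, Matrix.tail_cons] at h0 h1 h3
  have e0 : (a:ℝ) = d := by
    field_simp at h0; exact_mod_cast h0
  have e1 : (b:ℝ) = e := by
    field_simp at h1; exact_mod_cast h1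
  have e2 : (c:ℝ) = f := by
    field_simp at h3; exact_mod_cast h3
  simp only [Prod.mk.injEq]
  refine ⟨?_, ?_, ?_⟩
  · exact_mod_cast e0
  · exact_mod_cast e1
  · exact_mod_cast e2

lemma emb_dist (v w : V3) : dist (emb v) (emb w) =
    Real.sqrt (2 * ((Qf (v - w) : ℤ) : ℝ)) := by
  rw [EuclideanSpace.dist_eq]
  congr 1
  simp only [emb, WithLp.ofLp_toLp, Fin.sum_univ_three, Real.dist_eq, Matrix.cons_val_zero, Matrix.cons_val_one,
    Matrix.head_cons, Matrix.cons_val_two, Matrix.tail_cons, sq_abs]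
  have h2 : Real.sqrt 2 ^ 2 = 2 := Real.sq_sqrt (by norm_num)
  simp only [Qf, Prod.fst_sub, Prod.snd_sub]
  push_cast
  nlinarith [h2, sq_nonneg ((v.1:ℝ) - w.1), sq_nonneg ((v.2.1:ℝ) - w.2.1),
    sq_nonneg ((v.2.2:ℝ) - w.2.2)]

lemma Qf_even {w : V3} (h : (w.1 + w.2.1 + w.2.2) % 2 = 0) : Qf w % 2 = 0 := by
  obtain ⟨a, ha⟩ := Int.even_mul_succ_self w.1
  obtain ⟨b, hb⟩ := Int.even_mul_succ_self w.2.1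
  obtain ⟨c, hc⟩ := Int.even_mul_succ_self w.2.2
  have e1 : w.1^2 = a + a - w.1 := by nlinarith [ha]
  have e2 : w.2.1^2 = b + b - w.2.1 := by nlinarith [hb]
  have e3 : w.2.2^2 = c + c - w.2.2 := by nlinarith [hc]
  simp only [Qf, e1, e2, e3]
  omega

lemma Qf_nonneg (w : V3) : 0 ≤ Qf w := by
  simp only [Qf]; positivity

lemma dist_eq_two_iff (v w : V3) : dist (emb v) (emb w) = 2 ↔ Qf (v - w) = 2 := by
  rw [emb_dist]
  have hQz := Qf_nonneg (v - w)
  have hQr : (0:ℝ) ≤ ((Qf (v - w) : ℤ) : ℝ) := by exact_mod_cast hQz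
  have hQ : (0:ℝ) ≤ 2 * ((Qf (v - w) : ℤ) : ℝ) := by linarith
  constructor
  · intro h
    have hsq := congrArg (fun x => x^2) h
    rw [Real.sq_sqrt hQ] at hsq
    norm_num at hsq
    have : ((Qf (v-w) : ℤ) : ℝ) = 2 := by linarith
    exact_mod_cast this
  · intro h
    rw [h]
    have : (2:ℝ) * (((2:ℤ)):ℝ) = 2^2 := by norm_num
    rw [this, Real.sqrt_sq (by norm_num : (0:ℝ) ≤ 2)]

lemma dist_ge_two {k : ℕ} {v w : V3} (hv : v ∈ Om k) (hw : w ∈ Om k) (hne : v ≠ w) :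
    2 ≤ dist (emb v) (emb w) := by
  rw [emb_dist]
  have h1 := (mem_Om.mp hv).1
  have h2 := (mem_Om.mp hw).1
  have hpar : ((v - w).1 + (v - w).2.1 + (v - w).2.2) % 2 = 0 := by
    simp only [Prod.fst_sub, Prod.snd_sub]
    omega
  have heven := Qf_even hpar
  have hne' : Qf (v - w) ≠ 0 := by
    intro h0
    apply hne
    have e1 : (v-w).1 = 0 ∧ (v-w).2.1 = 0 ∧ (v-w).2.2 = 0 := by
      simp only [Qf] at h0
      refine ⟨?_, ?_, ?_⟩ <;> nlinarith [sq_nonneg (v-w).1, sq_nonneg (v-w).2.1,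
        sq_nonneg (v-w).2.2]
    obtain ⟨a1, a2, a3⟩ := e1
    simp only [Prod.fst_sub, Prod.snd_sub] at a1 a2 a3
    exact Prod.ext (by omega) (Prod.ext (by omega) (by omega))
  have hge : 2 ≤ Qf (v - w) := by
    have := Qf_nonneg (v - w)
    omega
  have : (4:ℝ) ≤ 2 * ((Qf (v - w) : ℤ) : ℝ) := by
    have : (2:ℝ) ≤ ((Qf (v - w) : ℤ) : ℝ) := by exact_mod_cast hge
    linarith
  calc (2:ℝ) = Real.sqrt 4 := by
        rw [show (4:ℝ) = 2^2 by norm_num, Real.sqrt_sq (by norm_num : (0:ℝ) ≤ 2)]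
    _ ≤ _ := Real.sqrt_le_sqrt this

lemma emb_mem_fcc {k : ℕ} {v : V3} (hv : v ∈ Om k) : emb v ∈ fccLattice := by
  have h1 := (mem_Om.mp hv).1
  constructor
  · intro i
    fin_cases i
    · exact ⟨v.1, rfl⟩
    · exact ⟨v.2.1, rfl⟩
    · exact ⟨v.2.2, rfl⟩
  · refine ⟨(v.1 + v.2.1 + v.2.2) / 2, ?_⟩
    have hh : ((v.1 + v.2.1 + v.2.2) / 2 : ℤ) * 2 = v.1 + v.2.1 + v.2.2 := by omega
    show (v.1:ℝ) * Real.sqrt 2 + (v.2.1:ℝ) * Real.sqrt 2 + (v.2.2:ℝ) * Real.sqrt 2 = _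
    have : ((v.1 + v.2.1 + v.2.2 : ℤ) : ℝ) = ((v.1 + v.2.1 + v.2.2) / 2 : ℤ) * 2 := by
      exact_mod_cast hh.symm
    push_cast at this ⊢
    linear_combination Real.sqrt 2 * this

lemma contacts_transfer (k : ℕ) :
    contactsOrdered ((Om k).image emb) = (Sset k).card := by
  unfold contactsOrdered Sset
  refine (Finset.card_bij (fun p _ => (emb p.1, emb p.2)) ?_ ?_ ?_).symm
  · rintro ⟨v, w⟩ hp
    simp only [Finset.mem_filter, Finset.mem_offDiag] at hp ⊢
    obtain ⟨⟨hv, hw, hne⟩, hQ⟩ := hp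
    refine ⟨⟨Finset.mem_image_of_mem emb hv, Finset.mem_image_of_mem emb hw, ?_⟩, ?_⟩
    · intro h; exact hne (emb_inj h)
    · exact (dist_eq_two_iff v w).mpr hQ
  · rintro ⟨v, w⟩ hp ⟨v', w'⟩ hp' h
    simp only [Prod.mk.injEq] at h ⊢
    exact ⟨emb_inj h.1, emb_inj h.2⟩
  · rintro ⟨p, q⟩ hq
    simp only [Finset.mem_filter, Finset.mem_offDiag, Finset.mem_image] at hq
    obtain ⟨⟨⟨v, hv, rfl⟩, ⟨w, hw, rfl⟩, hne⟩, hd⟩ := hq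
    refine ⟨(v, w), ?_, rfl⟩
    simp only [Finset.mem_filter, Finset.mem_offDiag]
    exact ⟨⟨hv, hw, fun h => hne (congrArg emb h)⟩, (dist_eq_two_iff v w).mp hd⟩

/-- For every `k ≥ 2` and `n = k(2k²+1)/3` there is an `n`-point subset of the fcc
lattice with exactly `2k(2k²-3k+1)` pairs at distance `2`; moreover
`2k(2k²-3k+1) > 6n - 486^(1/3) n^(2/3)`. -/
theorem fcc_octahedral_lower_bound (k n : ℕ) (hk : 2 ≤ k)
    (hn : 3 * n = k * (2 * k ^ 2 + 1)) :
    (∃ P : Finset (EuclideanSpace ℝ (Fin 3)), ↑P ⊆ fccLattice ∧ P.card = n ∧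
        (∀ x ∈ P, ∀ y ∈ P, x ≠ y → 2 ≤ dist x y) ∧
        contactsOrdered P = 2 * (2 * k * (2 * k ^ 2 - 3 * k + 1))) ∧
      (6 * n - (486 : ℝ) ^ ((1 : ℝ) / 3) * (n : ℝ) ^ ((2 : ℝ) / 3) <
        (2 * k * (2 * k ^ 2 - 3 * k + 1) : ℕ)) := by
  have hk1 : 1 ≤ k := by omega
  have hsub : 3 * k ≤ 2 * k ^ 2 + 1 := by nlinarith
  have hOm := card_Om_val k hk1
  have hOmP := card_OmP_val k hk1
  have hnz : (3:ℤ) * (n:ℤ) = (k:ℤ) * (2 * (k:ℤ)^2 + 1) := by exact_mod_cast hn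
  constructor
  · refine ⟨(Om k).image emb, ?_, ?_, ?_, ?_⟩
    · intro x hx
      rw [Finset.coe_image] at hx
      obtain ⟨v, hv, rfl⟩ := hx
      exact emb_mem_fcc hv
    · rw [Finset.card_image_of_injective _ emb_inj]
      have h3 : (3:ℤ) * ((Om k).card : ℤ) = 3 * (n:ℤ) := by rw [hOm, hnz]
      exact_mod_cast (by omega : ((Om k).card : ℤ) = (n:ℤ))
    · rintro x hx y hy hne
      rw [Finset.mem_image] at hx hy
      obtain ⟨v, hv, rfl⟩ := hx
      obtain ⟨w, hw, rfl⟩ := hy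
      exact dist_ge_two hv hw (fun h => hne (congrArg emb h))
    · rw [contacts_transfer, card_Sset_val]
      have key : ((12 * (OmP k).card : ℕ) : ℤ) =
          ((2 * (2 * k * (2 * k ^ 2 - 3 * k + 1)) : ℕ) : ℤ) := by
        push_cast [Nat.cast_sub (show 3 * k ≤ 2 * k ^ 2 from by nlinarith)]
        push_cast at hOmP
        linear_combination 4 * hOmP
      exact_mod_cast key
  · -- the analytic inequality
    have hCcast : ((2 * k * (2 * k ^ 2 - 3 * k + 1) : ℕ) : ℝ) =
        4*(k:ℝ)^3 - 6*(k:ℝ)^2 + 2*(k:ℝ) := by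
      push_cast [Nat.cast_sub (show 3 * k ≤ 2 * k ^ 2 from by nlinarith)]
      ring
    have hnr : (3:ℝ) * (n:ℝ) = (k:ℝ) * (2 * (k:ℝ)^2 + 1) := by exact_mod_cast hn
    have hkr : (2:ℝ) ≤ (k:ℝ) := by exact_mod_cast hk
    have hnpos : (0:ℝ) ≤ (n:ℝ) := Nat.cast_nonneg n
    have key : 216 * (k:ℝ)^6 < 486 * (n:ℝ)^2 := by
      have h9 : 9 * (n:ℝ)^2 = (k:ℝ)^2 * (2*(k:ℝ)^2+1)^2 := by
        nlinarith [hnr]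
      nlinarith [h9, hkr]
    have e1 : (486:ℝ) ^ ((1:ℝ)/3) * (n:ℝ) ^ ((2:ℝ)/3) = (486 * (n:ℝ)^2) ^ ((1:ℝ)/3) := by
      rw [Real.mul_rpow (by norm_num) (by positivity)]
      congr 1
      rw [show ((2:ℝ)/3) = (2:ℝ) * ((1:ℝ)/3) by norm_num, Real.rpow_mul hnpos]
      norm_num
    have e2 : ((216:ℝ) * (k:ℝ)^6) ^ ((1:ℝ)/3) = 6*(k:ℝ)^2 := by
      have h : (216:ℝ) * (k:ℝ)^6 = (6*(k:ℝ)^2)^(3:ℕ) := by ring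
      rw [h, ← Real.rpow_natCast (6*(k:ℝ)^2) 3, ← Real.rpow_mul (by positivity)]
      norm_num
    have hlt : (6:ℝ) * (k:ℝ)^2 < (486:ℝ) ^ ((1:ℝ)/3) * (n:ℝ) ^ ((2:ℝ)/3) := by
      rw [e1, ← e2]
      exact Real.rpow_lt_rpow (by positivity) key (by norm_num)
    rw [hCcast]
    have h6n : 6 * (n:ℝ) = 4*(k:ℝ)^3 + 2*(k:ℝ) := by linarith [hnr]  -- 6n = 2*3n = 2k(2k²+1)
    nlinarith [hlt, h6n]
end
end

section
/- For n = 2, 3, 4, 5 the maximal contact numbers of packings of n unit balls in ℝ³ are 1, 3, 6, 9 respectively. -/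
open scoped Classical

noncomputable section

def myPt (x y z : ℝ) : EuclideanSpace ℝ (Fin 3) := WithLp.toLp 2 ![x, y, z]

lemma dist_myPt (x1 y1 z1 x2 y2 z2 : ℝ) :
    dist (myPt x1 y1 z1) (myPt x2 y2 z2) =
      Real.sqrt ((x1 - x2) ^ 2 + (y1 - y2) ^ 2 + (z1 - z2) ^ 2) := by
  rw [EuclideanSpace.dist_eq]
  congr 1
  simp [Fin.sum_univ_three, myPt, Real.dist_eq, sq_abs]

lemma sqrt_eq_two {s : ℝ} (h : s = 4) : Real.sqrt s = 2 := by
  rw [h, show (4:ℝ) = 2 ^ 2 by norm_num, Real.sqrt_sq (by norm_num)]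

def aa : ℝ := Real.sqrt 2
lemma ha2 : aa ^ 2 = 2 := Real.sq_sqrt (by norm_num)

def pO : EuclideanSpace ℝ (Fin 3) := myPt 0 0 0
def pB : EuclideanSpace ℝ (Fin 3) := myPt aa aa 0
def pC : EuclideanSpace ℝ (Fin 3) := myPt aa 0 aa
def pD : EuclideanSpace ℝ (Fin 3) := myPt 0 aa aa
def pE : EuclideanSpace ℝ (Fin 3) := myPt (4*aa/3) (4*aa/3) (4*aa/3)

lemma dOB : dist pO pB = 2 := by
  rw [pO, pB, dist_myPt]; exact sqrt_eq_two (by linear_combination 2 * ha2)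
lemma dOC : dist pO pC = 2 := by
  rw [pO, pC, dist_myPt]; exact sqrt_eq_two (by linear_combination 2 * ha2)
lemma dOD : dist pO pD = 2 := by
  rw [pO, pD, dist_myPt]; exact sqrt_eq_two (by linear_combination 2 * ha2)
lemma dBC : dist pB pC = 2 := by
  rw [pB, pC, dist_myPt]; exact sqrt_eq_two (by linear_combination 2 * ha2)
lemma dBD : dist pB pD = 2 := by
  rw [pB, pD, dist_myPt]; exact sqrt_eq_two (by linear_combination 2 * ha2)
lemma dCD : dist pC pD = 2 := by
  rw [pC, pD, dist_myPt]; exact sqrt_eq_two (by linear_combination 2 * ha2)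
lemma dBE : dist pB pE = 2 := by
  rw [pB, pE, dist_myPt]; exact sqrt_eq_two (by linear_combination 2 * ha2)
lemma dCE : dist pC pE = 2 := by
  rw [pC, pE, dist_myPt]; exact sqrt_eq_two (by linear_combination 2 * ha2)
lemma dDE : dist pD pE = 2 := by
  rw [pD, pE, dist_myPt]; exact sqrt_eq_two (by linear_combination 2 * ha2)
lemma dOE : dist pO pE = Real.sqrt (32/3) := by
  rw [pO, pE, dist_myPt]; congr 1; linear_combination (16/3) * ha2
lemma dOE_gt : 2 < dist pO pE := by
  rw [dOE, show (2:ℝ) = Real.sqrt 4 from (sqrt_eq_two rfl).symm]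
  exact Real.sqrt_lt_sqrt (by norm_num) (by norm_num)



lemma ne_of_dist_two {x y : EuclideanSpace ℝ (Fin 3)} (h : dist x y = 2) : x ≠ y := by
  rintro rfl; rw [dist_self] at h; norm_num at h

lemma nOB : pO ≠ pB := ne_of_dist_two dOB
lemma nOC : pO ≠ pC := ne_of_dist_two dOC
lemma nOD : pO ≠ pD := ne_of_dist_two dOD
lemma nBC : pB ≠ pC := ne_of_dist_two dBC
lemma nBD : pB ≠ pD := ne_of_dist_two dBD
lemma nCD : pC ≠ pD := ne_of_dist_two dCD
lemma nBE : pB ≠ pE := ne_of_dist_two dBE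
lemma nCE : pC ≠ pE := ne_of_dist_two dCE
lemma nDE : pD ≠ pE := ne_of_dist_two dDE
lemma nOE : pO ≠ pE := by
  intro h; have := dOE_gt; rw [h, dist_self] at this; norm_num at this
lemma dBO : dist pB pO = 2 := by rw [dist_comm]; exact dOB
lemma dCO : dist pC pO = 2 := by rw [dist_comm]; exact dOC
lemma dDO : dist pD pO = 2 := by rw [dist_comm]; exact dOD
lemma dCB : dist pC pB = 2 := by rw [dist_comm]; exact dBC
lemma dDB : dist pD pB = 2 := by rw [dist_comm]; exact dBD
lemma dDC : dist pD pC = 2 := by rw [dist_comm]; exact dCD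
lemma dEB : dist pE pB = 2 := by rw [dist_comm]; exact dBE
lemma dEC : dist pE pC = 2 := by rw [dist_comm]; exact dCE
lemma dED : dist pE pD = 2 := by rw [dist_comm]; exact dDE

def P5 : Finset (EuclideanSpace ℝ (Fin 3)) := {pO, pB, pC, pD, pE}
def P4 : Finset (EuclideanSpace ℝ (Fin 3)) := {pO, pB, pC, pD}
def P3 : Finset (EuclideanSpace ℝ (Fin 3)) := {pO, pB, pC}
def P2 : Finset (EuclideanSpace ℝ (Fin 3)) := {pO, pB}

lemma cardP5 : P5.card = 5 := by
  rw [P5]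
  rw [Finset.card_insert_of_notMem (by simp [nOB, nOC, nOD, nOE]),
    Finset.card_insert_of_notMem (by simp [nBC, nBD, nBE]),
    Finset.card_insert_of_notMem (by simp [nCD, nCE]),
    Finset.card_insert_of_notMem (by simp [nDE]), Finset.card_singleton]

lemma cardP4 : P4.card = 4 := by
  rw [P4]
  rw [Finset.card_insert_of_notMem (by simp [nOB, nOC, nOD]),
    Finset.card_insert_of_notMem (by simp [nBC, nBD]),
    Finset.card_insert_of_notMem (by simp [nCD]), Finset.card_singleton]

lemma cardP3 : P3.card = 3 := by
  rw [P3]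
  rw [Finset.card_insert_of_notMem (by simp [nOB, nOC]),
    Finset.card_insert_of_notMem (by simp [nBC]), Finset.card_singleton]

lemma cardP2 : P2.card = 2 := by
  rw [P2, Finset.card_insert_of_notMem (by simp [nOB]), Finset.card_singleton]

/-- every pair of distinct points of P5 is at distance 2, except (pO, pE). -/
lemma distCases : ∀ x ∈ P5, ∀ y ∈ P5, x = y ∨ dist x y = 2 ∨
    (x = pO ∧ y = pE) ∨ (x = pE ∧ y = pO) := by
  simp only [P5, Finset.mem_insert, Finset.mem_singleton]
  rintro x (rfl|rfl|rfl|rfl|rfl) y (rfl|rfl|rfl|rfl|rfl) <;>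
    simp [dOB, dOC, dOD, dBC, dBD, dCD, dBE, dCE, dDE, dBO, dCO, dDO, dCB, dDB, dDC, dEB, dEC, dED]

lemma packP5 : ∀ x ∈ P5, ∀ y ∈ P5, x ≠ y → 2 ≤ dist x y := by
  intro x hx y hy hxy
  rcases distCases x hx y hy with h | h | ⟨rfl, rfl⟩ | ⟨rfl, rfl⟩
  · exact absurd h hxy
  · exact h.ge
  · exact dOE_gt.le
  · rw [dist_comm]; exact dOE_gt.le

lemma subP (Q : Finset (EuclideanSpace ℝ (Fin 3))) (hQ : Q ⊆ P5) :
    ∀ x ∈ Q, ∀ y ∈ Q, x ≠ y → 2 ≤ dist x y :=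
  fun x hx y hy h => packP5 x (hQ hx) y (hQ hy) h

lemma contactsFull (Q : Finset (EuclideanSpace ℝ (Fin 3))) (hQ : Q ⊆ P5)
    (hE : pE ∉ Q) : contactsOrdered Q = Q.card * Q.card - Q.card := by
  rw [contactsOrdered, Finset.filter_true_of_mem, Finset.offDiag_card]
  intro p hp
  rw [Finset.mem_offDiag] at hp
  obtain ⟨h1, h2, h12⟩ := hp
  rcases distCases p.1 (hQ h1) p.2 (hQ h2) with h | h | ⟨_, h⟩ | ⟨h, _⟩
  · exact absurd h h12
  · exact h
  · exact absurd (h ▸ h2) hE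
  · exact absurd (h ▸ h1) hE

lemma contactsP5 : contactsOrdered P5 = 18 := by
  have key : P5.offDiag.filter (fun p => dist p.1 p.2 = 2) =
      P5.offDiag \ {(pO, pE), (pE, pO)} := by
    ext p
    simp only [Finset.mem_filter, Finset.mem_sdiff, Finset.mem_insert,
      Finset.mem_singleton, Finset.mem_offDiag]
    constructor
    · rintro ⟨⟨h1, h2, h12⟩, hd⟩
      refine ⟨⟨h1, h2, h12⟩, ?_⟩
      rintro (h | h)
      · rw [h] at hd; simp at hd; exact absurd hd dOE_gt.ne'
      · rw [h] at hd; simp at hd; rw [dist_comm] at hd; exact absurd hd dOE_gt.ne'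
    · rintro ⟨⟨h1, h2, h12⟩, hne⟩
      refine ⟨⟨h1, h2, h12⟩, ?_⟩
      rcases distCases p.1 h1 p.2 h2 with h | h | ⟨ha, hb⟩ | ⟨ha, hb⟩
      · exact absurd h h12
      · exact h
      · exact absurd (Or.inl (Prod.ext ha hb)) hne
      · exact absurd (Or.inr (Prod.ext ha hb)) hne
  rw [contactsOrdered, key, Finset.card_sdiff_of_subset]
  · rw [Finset.offDiag_card, cardP5]
    rw [Finset.card_insert_of_notMem (by simp [Prod.ext_iff, nOE]),
      Finset.card_singleton]
  · intro p hp
    simp only [Finset.mem_insert, Finset.mem_singleton] at hp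
    rcases hp with rfl | rfl <;>
      simp [Finset.mem_offDiag, P5, nOE, nOE.symm]

open Finset in
lemma no_five_equidistant (x : Fin 5 → EuclideanSpace ℝ (Fin 3))
    (h : ∀ i j, i ≠ j → dist (x i) (x j) = 2) : False := by
  set v : Fin 4 → EuclideanSpace ℝ (Fin 3) := fun i => x i.succ - x 0 with hv
  have hnorm : ∀ i j : Fin 5, i ≠ j → ‖x i - x j‖ ^ 2 = 4 := by
    intro i j hij
    rw [← dist_eq_norm, h i j hij]; norm_num
  have hip : ∀ i j : Fin 4, inner ℝ (v i) (v j) = (if i = j then (4:ℝ) else 2) := by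
    intro i j
    by_cases hij : i = j
    · subst hij
      simp only [hv, if_pos rfl]
      rw [real_inner_self_eq_norm_sq]
      exact hnorm i.succ 0 (Fin.succ_ne_zero i)
    · rw [if_neg hij]
      have h1 : ‖v i‖ ^ 2 = 4 := hnorm i.succ 0 (Fin.succ_ne_zero i)
      have h2 : ‖v j‖ ^ 2 = 4 := hnorm j.succ 0 (Fin.succ_ne_zero j)
      have h3 : ‖v i - v j‖ ^ 2 = 4 := by
        have : v i - v j = x i.succ - x j.succ := by rw [hv]; exact sub_sub_sub_cancel_right _ _ _
        rw [this]
        exact hnorm i.succ j.succ (fun hh => hij (Fin.succ_injective _ hh))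
      have h4 := @norm_sub_sq_real _ _ _ (v i) (v j)
      linarith
  have hli : LinearIndependent ℝ v := by
    rw [Fintype.linearIndependent_iff]
    intro g hg
    have key : ∀ j : Fin 4, 2 * g j + 2 * ∑ i, g i = 0 := by
      intro j
      have h0 : inner ℝ (∑ i, g i • v i) (v j) = (0:ℝ) := by
        rw [hg, inner_zero_left]
      rw [sum_inner] at h0
      simp only [real_inner_smul_left, hip] at h0
      have hsplit : ∀ i : Fin 4, g i * (if i = j then (4:ℝ) else 2) =
          g i * 2 + (if i = j then g i * 2 else 0) := by
        intro i; by_cases hij : i = j <;> simp [hij] <;> ring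
      rw [Finset.sum_congr rfl (fun i _ => hsplit i), Finset.sum_add_distrib,
        Finset.sum_ite_eq' Finset.univ j (fun i => g i * 2)] at h0
      simp only [Finset.mem_univ, if_true, ← Finset.sum_mul] at h0
      linarith
    have hS : ∑ i, g i = 0 := by
      have := fun j => key j
      have hsum : ∑ j, (2 * g j + 2 * ∑ i, g i) = 0 := by
        simp [key]
      rw [Finset.sum_add_distrib, ← Finset.mul_sum] at hsum
      simp at hsum
      linarith [hsum]
    intro j
    have := key j
    rw [hS] at this
    linarith
  have hcard := hli.fintype_card_le_finrank
  rw [finrank_euclideanSpace_fin] at hcard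
  simp at hcard



lemma bound5 (P : Finset (EuclideanSpace ℝ (Fin 3))) (hcard : P.card = 5) :
    contactsOrdered P ≤ 18 := by
  by_cases hall : ∀ x ∈ P, ∀ y ∈ P, x ≠ y → dist x y = 2
  · exfalso
    set x : Fin 5 → EuclideanSpace ℝ (Fin 3) :=
      fun i => (P.equivFin.symm (Fin.cast hcard.symm i) : EuclideanSpace ℝ (Fin 3)) with hx
    have hmem : ∀ i, x i ∈ P := fun i => (P.equivFin.symm (Fin.cast hcard.symm i)).2
    have hinj : Function.Injective x := by
      intro i j hij
      have := Subtype.coe_injective hij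
      have := P.equivFin.symm.injective this
      exact Fin.cast_injective _ this
    exact no_five_equidistant x
      (fun i j hij => hall _ (hmem i) _ (hmem j) (fun he => hij (hinj he)))
  · push_neg at hall
    obtain ⟨a, ha, b, hb, hab, hd⟩ := hall
    have hsub : P.offDiag.filter (fun p => dist p.1 p.2 = 2) ⊆
        (P.offDiag.erase (a, b)).erase (b, a) := by
      intro p hp
      rw [Finset.mem_filter] at hp
      rw [Finset.mem_erase, Finset.mem_erase]
      refine ⟨?_, ?_, hp.1⟩
      · rintro rfl
        exact hd (by rw [dist_comm] at hp; exact hp.2)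
      · rintro rfl
        exact hd hp.2
    have h1 : (a, b) ∈ P.offDiag := by rw [Finset.mem_offDiag]; exact ⟨ha, hb, hab⟩
    have h2 : (b, a) ∈ P.offDiag.erase (a, b) := by
      rw [Finset.mem_erase, Finset.mem_offDiag]
      exact ⟨by simp [Prod.ext_iff]; intro h; exact absurd h.symm hab, hb, ha, hab.symm⟩
    calc contactsOrdered P ≤ ((P.offDiag.erase (a, b)).erase (b, a)).card :=
          Finset.card_le_card hsub
      _ = P.offDiag.card - 1 - 1 := by
          rw [Finset.card_erase_of_mem h2, Finset.card_erase_of_mem h1]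
      _ = 18 := by rw [Finset.offDiag_card, hcard]

lemma sub2 : P2 ⊆ P5 := by intro x; simp only [P2, P5, Finset.mem_insert, Finset.mem_singleton]; tauto
lemma sub3 : P3 ⊆ P5 := by intro x; simp only [P3, P5, Finset.mem_insert, Finset.mem_singleton]; tauto
lemma sub4 : P4 ⊆ P5 := by intro x; simp only [P4, P5, Finset.mem_insert, Finset.mem_singleton]; tauto

lemma trivBound (P : Finset (EuclideanSpace ℝ (Fin 3))) {n : ℕ} (hc : P.card = n) :
    contactsOrdered P ≤ n * n - n := by
  have := Finset.card_le_card (Finset.filter_subset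
    (fun p => dist p.1 p.2 = 2) P.offDiag)
  rw [Finset.offDiag_card, hc] at this
  exact this

/-- For `n = 2, 3, 4, 5`, the maximal contact number of a packing of `n` unit balls
in `ℝ³` is `1, 3, 6, 9` respectively. -/
theorem small_contact_numbers_space :
    ∀ p ∈ [((2 : ℕ), (1 : ℕ)), (3, 3), (4, 6), (5, 9)],
      (∀ P : Finset (EuclideanSpace ℝ (Fin 3)),
          (∀ x ∈ P, ∀ y ∈ P, x ≠ y → 2 ≤ dist x y) → P.card = p.1 →
          contactsOrdered P ≤ 2 * p.2) ∧
      (∃ P : Finset (EuclideanSpace ℝ (Fin 3)),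
          (∀ x ∈ P, ∀ y ∈ P, x ≠ y → 2 ≤ dist x y) ∧ P.card = p.1 ∧
          contactsOrdered P = 2 * p.2) := by
  intro p hp
  fin_cases hp
  · exact ⟨fun P _ hc => le_trans (trivBound P hc) (by norm_num),
      ⟨P2, subP P2 sub2, cardP2, by
        rw [contactsFull P2 sub2 (by simp [P2, nOE.symm, nBE.symm]), cardP2]; rfl⟩⟩
  · exact ⟨fun P _ hc => le_trans (trivBound P hc) (by norm_num),
      ⟨P3, subP P3 sub3, cardP3, by
        rw [contactsFull P3 sub3 (by simp [P3, nOE.symm, nBE.symm, nCE.symm]), cardP3]; rfl⟩⟩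
  · exact ⟨fun P _ hc => le_trans (trivBound P hc) (by norm_num),
      ⟨P4, subP P4 sub4, cardP4, by
        rw [contactsFull P4 sub4
          (by simp [P4, nOE.symm, nBE.symm, nCE.symm, nDE.symm]), cardP4]; rfl⟩⟩
  · exact ⟨fun P _ hc => le_trans (bound5 P hc) (by norm_num),
      ⟨P5, packP5, cardP5, by rw [contactsP5]; rfl⟩⟩
end
end

section
/- For all n ≥ 2, the maximum number of shared facets among the cells of a polyomino consisting of n cells of the square lattice ℤ² equals ⌊2n − 2√n⌋. -/
open scoped Classical

noncomputable section

/-- Twice the number of shared facets: ordered pairs of distinct points of `P ⊆ ℤ²`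
at Euclidean distance exactly `1`. -/
def adjPairsZ2 (P : Finset (ℤ × ℤ)) : ℕ :=
  (P.offDiag.filter fun p => (p.1.1 - p.2.1) ^ 2 + (p.1.2 - p.2.2) ^ 2 = 1).card

def Hc (P : Finset (ℤ × ℤ)) : ℕ := (P.filter fun p => (p.1 + 1, p.2) ∈ P).card
def Vc (P : Finset (ℤ × ℤ)) : ℕ := (P.filter fun p => (p.1, p.2 + 1) ∈ P).card

lemma sq_one_class (a b : ℤ) : a^2 + b^2 = 1 ↔ (a=1∧b=0)∨(a=-1∧b=0)∨(a=0∧b=1)∨(a=0∧b=-1) := by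
  constructor
  · intro h
    have h1 : -1 ≤ a ∧ a ≤ 1 := by constructor <;> nlinarith [sq_nonneg b]
    have h2 : -1 ≤ b ∧ b ≤ 1 := by constructor <;> nlinarith [sq_nonneg a]
    obtain ⟨ha1, ha2⟩ := h1; obtain ⟨hb1, hb2⟩ := h2
    interval_cases a <;> interval_cases b <;> omega
  · rintro (⟨h1,h2⟩|⟨h1,h2⟩|⟨h1,h2⟩|⟨h1,h2⟩) <;> subst h1 <;> subst h2 <;> ring

def Ed (P : Finset (ℤ × ℤ)) (d : ℤ × ℤ) : Finset ((ℤ×ℤ)×(ℤ×ℤ)) :=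
  (P.filter fun p => (p.1 + d.1, p.2 + d.2) ∈ P).image (fun p => (p, (p.1 + d.1, p.2 + d.2)))

lemma mem_Ed (P : Finset (ℤ × ℤ)) (d x : ℤ × ℤ) (y : ℤ × ℤ) :
    (x, y) ∈ Ed P d ↔ x ∈ P ∧ y ∈ P ∧ y.1 = x.1 + d.1 ∧ y.2 = x.2 + d.2 := by
  simp only [Ed, Finset.mem_image, Finset.mem_filter, Prod.ext_iff]
  constructor
  · rintro ⟨r, ⟨hr, hr2⟩, ⟨h1, h2⟩, h3, h4⟩
    have hx : x = r := Prod.ext_iff.mpr ⟨h1.symm, h2.symm⟩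
    have hy : y = (r.1 + d.1, r.2 + d.2) := Prod.ext_iff.mpr ⟨h3.symm, h4.symm⟩
    refine ⟨hx ▸ hr, hy ▸ hr2, by omega, by omega⟩
  · rintro ⟨hx, hy, h1, h2⟩
    exact ⟨x, ⟨hx, by rw [← h1, ← h2]; exact hy⟩, ⟨rfl, rfl⟩, h1.symm, h2.symm⟩

lemma card_Ed (P : Finset (ℤ × ℤ)) (d : ℤ × ℤ) :
    (Ed P d).card = (P.filter fun p => (p.1 + d.1, p.2 + d.2) ∈ P).card := by
  apply Finset.card_image_of_injOn
  intro p _ q _ h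
  exact (Prod.ext_iff.mp h).1

lemma adj_eq (P : Finset (ℤ × ℤ)) : adjPairsZ2 P = 2 * (Hc P + Vc P) := by
  have hS : (P.offDiag.filter fun p => (p.1.1 - p.2.1) ^ 2 + (p.1.2 - p.2.2) ^ 2 = 1)
      = Ed P (1,0) ∪ Ed P (-1,0) ∪ Ed P (0,1) ∪ Ed P (0,-1) := by
    ext ⟨x, y⟩
    simp only [Finset.mem_filter, Finset.mem_offDiag, Finset.mem_union, mem_Ed]
    constructor
    · rintro ⟨⟨hx, hy, hne⟩, hd⟩
      rcases (sq_one_class _ _).mp hd with ⟨h1,h2⟩|⟨h1,h2⟩|⟨h1,h2⟩|⟨h1,h2⟩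
      · exact Or.inl (Or.inl (Or.inr ⟨hx, hy, by omega, by omega⟩))
      · exact Or.inl (Or.inl (Or.inl ⟨hx, hy, by omega, by omega⟩))
      · exact Or.inr ⟨hx, hy, by omega, by omega⟩
      · exact Or.inl (Or.inr ⟨hx, hy, by omega, by omega⟩)
    · rintro (((⟨hx,hy,h1,h2⟩|⟨hx,hy,h1,h2⟩)|⟨hx,hy,h1,h2⟩)|⟨hx,hy,h1,h2⟩) <;>
        refine ⟨⟨hx, hy, fun h => by rw [h] at h1 h2; omega⟩, (sq_one_class _ _).mpr ?_⟩
      · right; left; constructor <;> omega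
      · left; constructor <;> omega
      · right; right; right; constructor <;> omega
      · right; right; left; constructor <;> omega
  have hdisj : ∀ d d' : ℤ × ℤ, d ≠ d' → Disjoint (Ed P d) (Ed P d') := by
    intro d d' hne
    rw [Finset.disjoint_left]
    rintro ⟨x, y⟩ h h'
    rw [mem_Ed] at h h'
    exact hne (Prod.ext_iff.mpr ⟨by omega, by omega⟩)
  have hcard : (Ed P (1,0) ∪ Ed P (-1,0) ∪ Ed P (0,1) ∪ Ed P (0,-1)).card
      = (Ed P (1,0)).card + (Ed P (-1,0)).card + (Ed P (0,1)).card + (Ed P (0,-1)).card := by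
    rw [Finset.card_union_of_disjoint, Finset.card_union_of_disjoint, Finset.card_union_of_disjoint]
    · exact hdisj _ _ (by decide)
    · exact Finset.disjoint_union_left.mpr ⟨hdisj _ _ (by decide), hdisj _ _ (by decide)⟩
    · exact Finset.disjoint_union_left.mpr ⟨Finset.disjoint_union_left.mpr
        ⟨hdisj _ _ (by decide), hdisj _ _ (by decide)⟩, hdisj _ _ (by decide)⟩
  have e1 : (Ed P (1,0)).card = Hc P := by rw [card_Ed, Hc]; norm_num
  have e3 : (Ed P (0,1)).card = Vc P := by rw [card_Ed, Vc]; norm_num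
  have e2 : (Ed P (-1,0)).card = Hc P := by
    rw [card_Ed, Hc]
    apply Finset.card_bij' (fun p _ => ((p.1 - 1, p.2) : ℤ×ℤ)) (fun q _ => ((q.1 + 1, q.2) : ℤ×ℤ))
    · intro p hp; simp only [Finset.mem_filter] at hp ⊢
      refine ⟨by simpa [sub_eq_add_neg] using hp.2, ?_⟩
      simpa using hp.1
    · intro q hq; simp only [Finset.mem_filter] at hq ⊢
      exact ⟨hq.2, by simpa using hq.1⟩
    · intro p _; simp
    · intro q _; simp
  have e4 : (Ed P (0,-1)).card = Vc P := by
    rw [card_Ed, Vc]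
    apply Finset.card_bij' (fun p _ => ((p.1, p.2 - 1) : ℤ×ℤ)) (fun q _ => ((q.1, q.2 + 1) : ℤ×ℤ))
    · intro p hp; simp only [Finset.mem_filter] at hp ⊢
      refine ⟨by simpa [sub_eq_add_neg] using hp.2, ?_⟩
      simpa using hp.1
    · intro q hq; simp only [Finset.mem_filter] at hq ⊢
      exact ⟨hq.2, by simpa using hq.1⟩
    · intro p _; simp
    · intro q _; simp
  rw [adjPairsZ2, hS, hcard, e1, e2, e3, e4]; ring

def rowMin (P : Finset (ℤ × ℤ)) (y : ℤ) : ℤ :=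
  if h : (P.filter fun p => p.2 = y).Nonempty
  then ((P.filter fun p => p.2 = y).image Prod.fst).min' (h.image _) else 0

set_option maxHeartbeats 1000000 in
lemma rowMin_le (P : Finset (ℤ × ℤ)) (p : ℤ × ℤ) (hp : p ∈ P) : rowMin P p.2 ≤ p.1 := by
  have hne : (P.filter fun q => q.2 = p.2).Nonempty := ⟨p, Finset.mem_filter.mpr ⟨hp, rfl⟩⟩
  rw [rowMin, dif_pos hne]
  apply Finset.min'_le
  exact Finset.mem_image.mpr ⟨p, Finset.mem_filter.mpr ⟨hp, rfl⟩, rfl⟩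

set_option maxHeartbeats 1000000 in
lemma rowMin_mem (P : Finset (ℤ × ℤ)) (y : ℤ) (hy : y ∈ P.image Prod.snd) :
    ((rowMin P y, y) : ℤ × ℤ) ∈ P := by
  rw [Finset.mem_image] at hy
  obtain ⟨p, hp, rfl⟩ := hy
  have hne : (P.filter fun q => q.2 = p.2).Nonempty := ⟨p, Finset.mem_filter.mpr ⟨hp, rfl⟩⟩
  rw [rowMin, dif_pos hne]
  have := Finset.min'_mem _ (hne.image Prod.fst)
  rw [Finset.mem_image] at this
  obtain ⟨r, hr, hr1⟩ := this
  rw [Finset.mem_filter] at hr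
  rw [← hr1, ← hr.2, Prod.mk.eta]
  exact hr.1

lemma Hc_le (P : Finset (ℤ × ℤ)) : Hc P + (P.image Prod.snd).card ≤ P.card := by
  classical
  set R := P.image Prod.snd with hR
  set Mins := R.image (fun y => ((rowMin P y, y) : ℤ × ℤ)) with hM
  have hMsub : Mins ⊆ P := by
    intro q hq
    rw [hM, Finset.mem_image] at hq
    obtain ⟨y, hy, rfl⟩ := hq
    exact rowMin_mem P y hy
  have hMcard : Mins.card = R.card :=
    Finset.card_image_of_injOn (fun y _ z _ h => (Prod.ext_iff.mp h).2)
  have hmaps : ∀ p ∈ P.filter (fun p => (p.1 + 1, p.2) ∈ P),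
      ((p.1 + 1, p.2) : ℤ × ℤ) ∈ P \ Mins := by
    intro p hp
    rw [Finset.mem_filter] at hp
    rw [Finset.mem_sdiff]
    refine ⟨hp.2, fun hq => ?_⟩
    rw [hM, Finset.mem_image] at hq
    obtain ⟨y, hy, hyq⟩ := hq
    obtain ⟨h1, h2⟩ := Prod.ext_iff.mp hyq
    simp only at h1 h2
    subst h2
    have := rowMin_le P p hp.1
    omega
  have hinj : Set.InjOn (fun p : ℤ × ℤ => ((p.1 + 1, p.2) : ℤ × ℤ))
      ↑(P.filter (fun p => (p.1 + 1, p.2) ∈ P)) := by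
    intro p _ q _ h
    obtain ⟨h1, h2⟩ := Prod.ext_iff.mp h
    simp only at h1 h2
    exact Prod.ext_iff.mpr ⟨by omega, h2⟩
  have h1 : Hc P ≤ (P \ Mins).card := Finset.card_le_card_of_injOn _ hmaps hinj
  have h2 : (P \ Mins).card = P.card - Mins.card := Finset.card_sdiff_of_subset hMsub
  have h3 : Mins.card ≤ P.card := Finset.card_le_card hMsub
  omega

lemma Vc_le (P : Finset (ℤ × ℤ)) : Vc P + (P.image Prod.fst).card ≤ P.card := by
  classical
  have h1 : Vc P = Hc (P.image Prod.swap) := by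
    rw [Vc, Hc]
    apply Finset.card_bij' (fun p _ => Prod.swap p) (fun q _ => Prod.swap q)
    · rintro ⟨a, b⟩ hp
      rw [Finset.mem_filter] at hp ⊢
      exact ⟨Finset.mem_image.mpr ⟨(a, b), hp.1, rfl⟩,
        Finset.mem_image.mpr ⟨(a, b + 1), hp.2, rfl⟩⟩
    · rintro ⟨b, a⟩ hq
      rw [Finset.mem_filter] at hq ⊢
      obtain ⟨hq1, hq2⟩ := hq
      rw [Finset.mem_image] at hq1 hq2
      obtain ⟨p, hp, hps⟩ := hq1
      obtain ⟨r, hr, hrs⟩ := hq2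
      have hp' : p = (a, b) := by simpa using congrArg Prod.swap hps
      have hr' : r = (a, b + 1) := by simpa using congrArg Prod.swap hrs
      subst hp'; subst hr'
      exact ⟨hp, hr⟩
    · intro p _; simp
    · intro q _; simp
  have h2 : (P.image Prod.swap).image Prod.snd = P.image Prod.fst := by
    rw [Finset.image_image]; rfl
  have h3 : (P.image Prod.swap).card = P.card :=
    Finset.card_image_of_injective _ Prod.swap_injective
  have := Hc_le (P.image Prod.swap)
  rw [h2, h3] at this
  omega

lemma card_le_mul (P : Finset (ℤ × ℤ)) :
    P.card ≤ (P.image Prod.fst).card * (P.image Prod.snd).card := by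
  have hsub : P ⊆ (P.image Prod.fst) ×ˢ (P.image Prod.snd) := by
    intro p hp
    rw [Finset.mem_product]
    exact ⟨Finset.mem_image.mpr ⟨p, hp, rfl⟩, Finset.mem_image.mpr ⟨p, hp, rfl⟩⟩
  simpa [Finset.card_product] using Finset.card_le_card hsub

lemma floor_val (n : ℕ) (c : ℤ) (hc : 1 ≤ c) (h1 : 4 * (n : ℤ) ≤ c ^ 2)
    (h2 : (c - 1) ^ 2 < 4 * (n : ℤ)) :
    ⌊(2 * n - 2 * Real.sqrt n : ℝ)⌋ = 2 * (n : ℤ) - c := by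
  have h0 : (0 : ℝ) ≤ n := by positivity
  have hc1 : (1 : ℝ) ≤ (c : ℝ) := by exact_mod_cast hc
  have hub : Real.sqrt n ≤ (c : ℝ) / 2 := by
    rw [show ((c : ℝ) / 2) = Real.sqrt (((c : ℝ) / 2) ^ 2) from
      (Real.sqrt_sq (by linarith)).symm]
    apply Real.sqrt_le_sqrt
    have : (4 * n : ℝ) ≤ (c : ℝ) ^ 2 := by exact_mod_cast h1
    nlinarith
  have hlb : ((c : ℝ) - 1) / 2 < Real.sqrt n := by
    have hcast : (((c : ℝ) - 1) / 2) ^ 2 < n := by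
      have : ((c : ℝ) - 1) ^ 2 < 4 * n := by exact_mod_cast h2
      nlinarith
    have h := Real.sqrt_lt_sqrt (by positivity) hcast
    rwa [Real.sqrt_sq (by linarith)] at h
  rw [Int.floor_eq_iff]
  constructor
  · push_cast; linarith
  · push_cast; linarith

def Qr (a b t : ℤ) : Finset (ℤ × ℤ) :=
  (Finset.Ico 0 b ×ˢ Finset.Ico 0 a) ∪ (Finset.Ico 0 t ×ˢ {a})

lemma mem_Qr (a b t x y : ℤ) :
    (x, y) ∈ Qr a b t ↔ (0 ≤ x ∧ x < b ∧ 0 ≤ y ∧ y < a) ∨ (0 ≤ x ∧ x < t ∧ y = a) := by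
  simp only [Qr, Finset.mem_union, Finset.mem_product, Finset.mem_Ico, Finset.mem_singleton]
  omega

lemma card_Qr (a b t : ℤ) (ha : 0 ≤ a) (hb : 0 ≤ b) (ht : 0 ≤ t) :
    ((Qr a b t).card : ℤ) = b * a + t := by
  rw [Qr, Finset.card_union_of_disjoint]
  · push_cast [Finset.card_product, Int.card_Ico, Finset.card_singleton]
    rw [Int.toNat_of_nonneg (by omega), Int.toNat_of_nonneg (by omega), Int.toNat_of_nonneg (by omega)]
    ring
  · rw [Finset.disjoint_left]
    rintro ⟨x, y⟩ h h'
    simp only [Finset.mem_product, Finset.mem_Ico, Finset.mem_singleton] at h h'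
    omega

lemma Hc_Qr (a b t : ℤ) (ha : 1 ≤ a) (ht : 1 ≤ t) (htb : t ≤ b) :
    ((Hc (Qr a b t)) : ℤ) = (b - 1) * a + (t - 1) := by
  have hset : (Qr a b t).filter (fun p => (p.1 + 1, p.2) ∈ Qr a b t) = Qr a (b - 1) (t - 1) := by
    ext ⟨x, y⟩
    simp only [Finset.mem_filter, mem_Qr]
    omega
  rw [Hc, hset, card_Qr a (b - 1) (t - 1) (by omega) (by omega) (by omega)]

lemma Vc_Qr (a b t : ℤ) (ha : 1 ≤ a) (ht : 1 ≤ t) (htb : t ≤ b) :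
    ((Vc (Qr a b t)) : ℤ) = b * (a - 1) + t := by
  have hset : (Qr a b t).filter (fun p => (p.1, p.2 + 1) ∈ Qr a b t) = Qr (a - 1) b t := by
    ext ⟨x, y⟩
    simp only [Finset.mem_filter, mem_Qr]
    omega
  rw [Vc, hset, card_Qr (a - 1) b t (by omega) (by omega) (by omega)]

/-- The maximum number of shared facets among `n ≥ 2` cells of the square lattice `ℤ²`
equals `⌊2n - 2√n⌋`. -/
theorem polyomino_max_shared_facets (n : ℕ) (hn : 2 ≤ n) :
    (∀ P : Finset (ℤ × ℤ), P.card = n →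
        (adjPairsZ2 P : ℤ) ≤ 2 * ⌊(2 * n - 2 * Real.sqrt n : ℝ)⌋) ∧
      ∃ P : Finset (ℤ × ℤ), P.card = n ∧
        (adjPairsZ2 P : ℤ) = 2 * ⌊(2 * n - 2 * Real.sqrt n : ℝ)⌋ := by
  obtain ⟨a, b, t, c, ha, ht, htb, hcard, hc1, hcsq, hclt, hsum⟩ :
      ∃ a b t c : ℤ, 1 ≤ a ∧ 1 ≤ t ∧ t ≤ b ∧ b * a + t = (n : ℤ) ∧ 1 ≤ c ∧
        4 * (n : ℤ) ≤ c ^ 2 ∧ (c - 1) ^ 2 < 4 * (n : ℤ) ∧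
        (b - 1) * a + (t - 1) + (b * (a - 1) + t) = 2 * (n : ℤ) - c := by
    set k := Nat.sqrt n with hkdef
    have hks' : ((k : ℤ)) ^ 2 ≤ (n : ℤ) := by exact_mod_cast Nat.sqrt_le' n
    have hlt' : ((n : ℤ)) < ((k : ℤ) + 1) ^ 2 := by exact_mod_cast Nat.lt_succ_sqrt' n
    have hn' : (2 : ℤ) ≤ (n : ℤ) := by exact_mod_cast hn
    have hk1 : (1 : ℤ) ≤ (k : ℤ) := by nlinarith
    by_cases h1 : (n : ℤ) = (k : ℤ) ^ 2
    · have hk2 : (2 : ℤ) ≤ (k : ℤ) := by nlinarith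
      exact ⟨(k : ℤ) - 1, k, k, 2 * k, by omega, by omega, le_refl _,
        by linear_combination -h1, by omega, by nlinarith, by nlinarith,
        by linear_combination -2 * h1⟩
    · by_cases h2 : (n : ℤ) ≤ (k : ℤ) ^ 2 + k
      · have hgt : (k : ℤ) ^ 2 < (n : ℤ) := lt_of_le_of_ne hks' (fun h => h1 h.symm)
        exact ⟨(k : ℤ), k, (n : ℤ) - k ^ 2, 2 * k + 1, by omega, by linarith, by linarith,
          by ring, by omega, by nlinarith, by nlinarith, by ring⟩
      · push_neg at h2
        exact ⟨(k : ℤ), (k : ℤ) + 1, (n : ℤ) - k ^ 2 - k, 2 * k + 2, by omega, by linarith,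
          by nlinarith, by ring, by omega, by nlinarith, by nlinarith, by ring⟩
  have hfl : ⌊(2 * n - 2 * Real.sqrt n : ℝ)⌋ = 2 * (n : ℤ) - c := floor_val n c hc1 hcsq hclt
  constructor
  · intro P hP
    rw [adj_eq P, hfl]
    have hH := Hc_le P
    have hV := Vc_le P
    have hm := card_le_mul P
    set r := (P.image Prod.snd).card with hr
    set cc := (P.image Prod.fst).card with hcc
    rw [hP] at hH hV hm
    have hflo : (2 * (n : ℤ) - cc - r) ≤ 2 * (n : ℤ) - c := by
      have h4 : 4 * (n : ℤ) ≤ ((cc : ℤ) + r) ^ 2 := by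
        have h5 : (n : ℤ) ≤ (cc : ℤ) * r := by exact_mod_cast hm
        nlinarith [sq_nonneg ((cc : ℤ) - r)]
      -- c ≤ cc + r  since 4n ≤ (cc+r)^2 and (c-1)^2 < 4n, both sides ≥ 0
      have h6 : (c - 1) ^ 2 < ((cc : ℤ) + r) ^ 2 := lt_of_lt_of_le hclt h4
      have h7 : c - 1 < (cc : ℤ) + r := by
        by_contra hcon
        push_neg at hcon
        have h0 : (0 : ℤ) ≤ (cc : ℤ) + r := by positivity
        have := pow_le_pow_left₀ h0 hcon 2
        linarith
      omega
    have h8 : (Hc P : ℤ) + (Vc P : ℤ) ≤ 2 * (n : ℤ) - cc - r := by push_cast at hH hV ⊢; omega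
    push_cast
    linarith
  · refine ⟨Qr a b t, ?_, ?_⟩
    · have h := card_Qr a b t (by omega) (by omega) (by omega)
      rw [hcard] at h
      exact_mod_cast h
    · rw [adj_eq, hfl]
      have hH := Hc_Qr a b t ha ht htb
      have hV := Vc_Qr a b t ha ht htb
      push_cast
      push_cast at hH hV
      linarith
end
end

section
/- For all n > 1 and d ≥ 2, the maximum number of pairs of points at distance exactly 1 among n points of the integer lattice ℤ^d is at most ⌊dn − d·n^((d−1)/d)⌋. -/
open scoped Classical

noncomputable section

lemma my_holder {τ ι : Type*} (T : Finset τ) (s : Finset ι) (hs : s.Nonempty)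
    (a : ι → τ → ℝ) (ha : ∀ i t, 0 ≤ a i t) :
    ∑ t ∈ T, ∏ i ∈ s, (a i t) ^ ((s.card : ℝ)⁻¹) ≤
      ∏ i ∈ s, (∑ t ∈ T, a i t) ^ ((s.card : ℝ)⁻¹) := by
  have hkpos : (0:ℝ) < (s.card : ℝ) := by
    have := Finset.card_pos.mpr hs; positivity
  by_cases hzero : ∃ i ∈ s, ∑ t ∈ T, a i t = 0
  · obtain ⟨i0, hi0, hS0⟩ := hzero
    have hai0 : ∀ t ∈ T, a i0 t = 0 := by
      intro t ht
      have := (Finset.sum_eq_zero_iff_of_nonneg (fun t _ => ha i0 t)).mp hS0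
      exact this t ht
    have hL : ∑ t ∈ T, ∏ i ∈ s, (a i t) ^ ((s.card : ℝ)⁻¹) = 0 := by
      apply Finset.sum_eq_zero
      intro t ht
      apply Finset.prod_eq_zero hi0
      rw [hai0 t ht, Real.zero_rpow (by positivity)]
    rw [hL]
    exact Finset.prod_nonneg fun i _ => Real.rpow_nonneg (Finset.sum_nonneg fun t _ => ha i t) _
  push_neg at hzero
  have hSpos : ∀ i ∈ s, 0 < ∑ t ∈ T, a i t := fun i hi =>
    lt_of_le_of_ne (Finset.sum_nonneg fun t _ => ha i t) (Ne.symm (hzero i hi))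
  have key : ∀ t ∈ T, ∏ i ∈ s, (a i t) ^ ((s.card : ℝ)⁻¹) ≤
      (∏ i ∈ s, (∑ u ∈ T, a i u) ^ ((s.card : ℝ)⁻¹)) *
        ∑ i ∈ s, (s.card : ℝ)⁻¹ * (a i t / ∑ u ∈ T, a i u) := by
    intro t ht
    have hgm := Real.geom_mean_le_arith_mean_weighted s (fun _ => (s.card : ℝ)⁻¹)
      (fun i => a i t / ∑ u ∈ T, a i u) (fun i _ => by positivity)
      (by rw [Finset.sum_const, nsmul_eq_mul]; field_simp)
      (fun i hi => div_nonneg (ha i t) (Finset.sum_nonneg fun u _ => ha i u))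
    calc ∏ i ∈ s, (a i t) ^ ((s.card : ℝ)⁻¹)
        = (∏ i ∈ s, (∑ u ∈ T, a i u) ^ ((s.card : ℝ)⁻¹)) *
          ∏ i ∈ s, (a i t / ∑ u ∈ T, a i u) ^ ((s.card : ℝ)⁻¹) := by
          rw [← Finset.prod_mul_distrib]
          apply Finset.prod_congr rfl
          intro i hi
          rw [Real.div_rpow (ha i t) (le_of_lt (hSpos i hi))]
          rw [mul_div_assoc', mul_comm, mul_div_assoc,
            div_self (ne_of_gt (Real.rpow_pos_of_pos (hSpos i hi) _)), mul_one]
      _ ≤ _ := by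
          apply mul_le_mul_of_nonneg_left hgm
          exact Finset.prod_nonneg fun i hi => Real.rpow_nonneg (le_of_lt (hSpos i hi)) _
  calc ∑ t ∈ T, ∏ i ∈ s, (a i t) ^ ((s.card : ℝ)⁻¹)
      ≤ ∑ t ∈ T, (∏ i ∈ s, (∑ u ∈ T, a i u) ^ ((s.card : ℝ)⁻¹)) *
          ∑ i ∈ s, (s.card : ℝ)⁻¹ * (a i t / ∑ u ∈ T, a i u) :=
        Finset.sum_le_sum key
    _ = (∏ i ∈ s, (∑ u ∈ T, a i u) ^ ((s.card : ℝ)⁻¹)) *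
          ∑ t ∈ T, ∑ i ∈ s, (s.card : ℝ)⁻¹ * (a i t / ∑ u ∈ T, a i u) := by
        rw [Finset.mul_sum]
    _ ≤ ∏ i ∈ s, (∑ u ∈ T, a i u) ^ ((s.card : ℝ)⁻¹) := by
        nth_rewrite 2 [← mul_one (∏ i ∈ s, (∑ u ∈ T, a i u) ^ ((s.card : ℝ)⁻¹))]
        apply mul_le_mul_of_nonneg_left _ (Finset.prod_nonneg fun i hi =>
          Real.rpow_nonneg (le_of_lt (hSpos i hi)) _)
        rw [Finset.sum_comm]
        have : ∀ i ∈ s, ∑ t ∈ T, (s.card : ℝ)⁻¹ * (a i t / ∑ u ∈ T, a i u)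
            = (s.card : ℝ)⁻¹ := by
          intro i hi
          rw [← Finset.mul_sum, ← Finset.sum_div, div_self (ne_of_gt (hSpos i hi)), mul_one]
        rw [Finset.sum_congr rfl this, Finset.sum_const, nsmul_eq_mul]
        field_simp
        exact le_rfl


def projZ {d : ℕ} (i : Fin d) (p : Fin d → ℤ) : Fin d → ℤ := Function.update p i 0

lemma upd_inj {d : ℕ} (j : Fin d) {p q : Fin d → ℤ} (h0 : p j = q j)
    (h : Function.update p j 0 = Function.update q j 0) : p = q := by
  funext k
  by_cases hk : k = j
  · subst hk; exact h0
  · have := congrFun h k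
    simpa [Function.update_of_ne hk] using this

lemma LW {d : ℕ} (s : Finset (Fin d)) : ∀ (P : Finset (Fin d → ℤ)), P.Nonempty →
    (∀ p ∈ P, ∀ j, j ∉ s → p j = 0) →
    (P.card : ℝ) ^ (s.card - 1) ≤ ∏ i ∈ s, ((P.image (projZ i)).card : ℝ) := by
  induction s using Finset.induction_on with
  | empty => intro P hP hvan; simp
  | @insert j s' hj IH =>
    intro P hP hvan
    rcases s'.eq_empty_or_nonempty with rfl | hs'
    · simp only [Finset.card_insert_of_notMem hj, Finset.card_empty]
      have : (P.image (projZ j)).Nonempty := hP.image _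
      have h1 : 1 ≤ ((P.image (projZ j)).card : ℝ) :=
        Nat.one_le_cast.mpr (Finset.card_pos.mpr this)
      simpa using h1
    · -- main case
      set k := s'.card with hk
      have hk0 : k ≠ 0 := (Finset.card_pos.mpr hs').ne'
      set T := P.image (fun p => p j) with hT
      set Pt := fun t : ℤ => P.filter (fun p => p j = t) with hPt
      set Qt := fun t : ℤ => (Pt t).image (fun p => Function.update p j 0) with hQt
      -- fiber nonempty
      have hPtne : ∀ t ∈ T, (Pt t).Nonempty := by
        intro t ht
        obtain ⟨p, hp, hpt⟩ := Finset.mem_image.mp ht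
        exact ⟨p, Finset.mem_filter.mpr ⟨hp, hpt⟩⟩
      have hQtcard : ∀ t : ℤ, (Qt t).card = (Pt t).card := by
        intro t
        apply Finset.card_image_of_injOn
        intro p hp q hq h
        have hpj : p j = t := (Finset.mem_filter.mp hp).2
        have hqj : q j = t := (Finset.mem_filter.mp hq).2
        exact upd_inj j (hpj.trans hqj.symm) h
      -- IH input: Qt vanishes off s'
      have hQvan : ∀ t, ∀ q ∈ Qt t, ∀ l, l ∉ s' → q l = 0 := by
        intro t q hq l hl
        obtain ⟨p, hp, rfl⟩ := Finset.mem_image.mp hq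
        by_cases hlj : l = j
        · subst hlj; simp
        · rw [Function.update_of_ne hlj]
          exact hvan p (Finset.mem_filter.mp hp).1 l (by simp [hlj, hl])
      -- b i t
      set b := fun (i : Fin d) (t : ℤ) => (((Pt t).image (projZ i)).card : ℝ) with hb
      set c := fun (i : Fin d) => ((P.image (projZ i)).card : ℝ) with hc
      have hbnn : ∀ i t, 0 ≤ b i t := fun i t => Nat.cast_nonneg _
      have hcnn : ∀ i, 0 ≤ c i := fun i => Nat.cast_nonneg _
      -- (f6): card of projections of Qt equals b i t, for i ∈ s'
      have hf6 : ∀ i ∈ s', ∀ t : ℤ, (((Qt t).image (projZ i)).card : ℝ) = b i t := by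
        intro i hi t
        have hij : i ≠ j := fun h => hj (h ▸ hi)
        have himg : (Qt t).image (projZ i)
            = ((Pt t).image (projZ i)).image (fun q => Function.update q j 0) := by
          rw [hQt, Finset.image_image, Finset.image_image]
          apply Finset.image_congr
          intro p _
          simp only [Function.comp_apply, projZ]
          exact Function.update_comm hij.symm 0 0 p
        rw [himg, hb]
        beta_reduce
        norm_cast
        apply Finset.card_image_of_injOn
        intro x hx y hy h
        obtain ⟨p, hp, rfl⟩ := Finset.mem_image.mp hx
        obtain ⟨q, hq, rfl⟩ := Finset.mem_image.mp hy
        have hpj : projZ i p j = t := by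
          rw [projZ, Function.update_of_ne (fun hh => hij hh.symm)]
          exact (Finset.mem_filter.mp hp).2
        have hqj : projZ i q j = t := by
          rw [projZ, Function.update_of_ne (fun hh => hij hh.symm)]
          exact (Finset.mem_filter.mp hq).2
        exact upd_inj j (hpj.trans hqj.symm) h
      -- (f7): sum of b over fibers at most c i, for i ∈ s'
      have hf7 : ∀ i ∈ s', ∑ t ∈ T, b i t ≤ c i := by
        intro i hi
        have hij : i ≠ j := fun h => hj (h ▸ hi)
        rw [hb, hc]
        push_cast
        have hdisj : ∀ t₁ ∈ T, ∀ t₂ ∈ T, t₁ ≠ t₂ →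
            Disjoint ((Pt t₁).image (projZ i)) ((Pt t₂).image (projZ i)) := by
          intro t₁ _ t₂ _ hne
          rw [Finset.disjoint_left]
          intro x hx1 hx2
          obtain ⟨p, hp, rfl⟩ := Finset.mem_image.mp hx1
          obtain ⟨q, hq, hqe⟩ := Finset.mem_image.mp hx2
          apply hne
          have h1 : projZ i p j = t₁ := by
            rw [projZ, Function.update_of_ne (fun hh => hij hh.symm)]
            exact (Finset.mem_filter.mp hp).2
          have h2 : projZ i p j = t₂ := by
            rw [← hqe, projZ, Function.update_of_ne (fun hh => hij hh.symm)]
            exact (Finset.mem_filter.mp hq).2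
          rw [← h1, h2]
        have := Finset.card_biUnion hdisj
        have hsub : T.biUnion (fun t => (Pt t).image (projZ i)) ⊆ P.image (projZ i) := by
          intro x hx
          obtain ⟨t, _, hxt⟩ := Finset.mem_biUnion.mp hx
          exact Finset.image_subset_image (Finset.filter_subset _ _) hxt
        calc (∑ t ∈ T, (((Pt t).image (projZ i)).card : ℝ))
            = ((T.biUnion (fun t => (Pt t).image (projZ i))).card : ℝ) := by
              rw [this]; push_cast; ring
          _ ≤ _ := by exact_mod_cast Finset.card_le_card hsub
      -- (f8)
      have hf8 : ∀ t ∈ T, ((Qt t).card : ℝ) ≤ c j := by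
        intro t _
        show ((Qt t).card : ℝ) ≤ ((P.image (projZ j)).card : ℝ)
        have : Qt t ⊆ P.image (projZ j) := by
          rw [hQt]
          exact Finset.image_subset_image (Finset.filter_subset _ _)
        exact_mod_cast Finset.card_le_card this
      -- key per-fiber bound
      have hkey : ∀ t ∈ T, ((Pt t).card : ℝ) ≤
          (c j) ^ ((k : ℝ)⁻¹) * ∏ i ∈ s', (b i t) ^ ((k : ℝ)⁻¹) := by
        intro t ht
        have hIH := IH (Qt t) ((hPtne t ht).image _) (hQvan t)
        have hQP : ((Qt t).card : ℝ) = ((Pt t).card : ℝ) := by exact_mod_cast hQtcard t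
        have hpow : ((Pt t).card : ℝ) ^ k ≤ c j * ∏ i ∈ s', b i t := by
          have h1 : ((Pt t).card : ℝ) ^ k = ((Qt t).card : ℝ) * ((Qt t).card : ℝ) ^ (k - 1) := by
            rw [hQP, ← pow_succ', Nat.sub_add_cancel (Nat.one_le_iff_ne_zero.mpr hk0)]
          rw [h1]
          apply mul_le_mul (hf8 t ht)
          · calc ((Qt t).card : ℝ) ^ (k - 1) ≤ ∏ i ∈ s', (((Qt t).image (projZ i)).card : ℝ) := by
                  exact_mod_cast hIH
              _ = ∏ i ∈ s', b i t := Finset.prod_congr rfl (fun i hi => hf6 i hi t)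
          · positivity
          · exact hcnn j
        calc ((Pt t).card : ℝ)
            = (((Pt t).card : ℝ) ^ k) ^ ((k : ℝ)⁻¹) := by
              rw [← Real.rpow_natCast (((Pt t).card : ℝ)) k, ← Real.rpow_mul (Nat.cast_nonneg _)]
              rw [mul_inv_cancel₀ (Nat.cast_ne_zero.mpr hk0), Real.rpow_one]
          _ ≤ (c j * ∏ i ∈ s', b i t) ^ ((k : ℝ)⁻¹) := by
              apply Real.rpow_le_rpow (by positivity) hpow (by positivity)
          _ = (c j) ^ ((k : ℝ)⁻¹) * ∏ i ∈ s', (b i t) ^ ((k : ℝ)⁻¹) := by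
              rw [Real.mul_rpow (hcnn j) (Finset.prod_nonneg fun i _ => hbnn i _),
                ← Real.finset_prod_rpow s' _ (fun i _ => hbnn i _)]
      -- sum over fibers, Hölder
      have hPsum : (P.card : ℝ) = ∑ t ∈ T, ((Pt t).card : ℝ) := by
        have := Finset.card_eq_sum_card_fiberwise
          (f := fun p => p j) (s := P) (t := T)
          (fun p hp => Finset.mem_image_of_mem _ hp)
        exact_mod_cast this
      have hsum : (P.card : ℝ) ≤ (c j) ^ ((k : ℝ)⁻¹) * ∏ i ∈ s', (c i) ^ ((k : ℝ)⁻¹) := by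
        calc (P.card : ℝ) = ∑ t ∈ T, ((Pt t).card : ℝ) := hPsum
          _ ≤ ∑ t ∈ T, (c j) ^ ((k : ℝ)⁻¹) * ∏ i ∈ s', (b i t) ^ ((k : ℝ)⁻¹) :=
            Finset.sum_le_sum hkey
          _ = (c j) ^ ((k : ℝ)⁻¹) * ∑ t ∈ T, ∏ i ∈ s', (b i t) ^ ((k : ℝ)⁻¹) := by
            rw [Finset.mul_sum]
          _ ≤ (c j) ^ ((k : ℝ)⁻¹) * ∏ i ∈ s', (∑ t ∈ T, b i t) ^ ((k : ℝ)⁻¹) :=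
            mul_le_mul_of_nonneg_left (my_holder T s' hs' b hbnn)
              (Real.rpow_nonneg (hcnn j) _)
          _ ≤ (c j) ^ ((k : ℝ)⁻¹) * ∏ i ∈ s', (c i) ^ ((k : ℝ)⁻¹) := by
            apply mul_le_mul_of_nonneg_left _ (Real.rpow_nonneg (hcnn j) _)
            apply Finset.prod_le_prod
              (fun i _ => Real.rpow_nonneg (Finset.sum_nonneg fun t _ => hbnn i t) _)
            intro i hi
            exact Real.rpow_le_rpow (Finset.sum_nonneg fun t _ => hbnn i t) (hf7 i hi)
              (inv_nonneg.mpr (Nat.cast_nonneg k))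
      -- raise to the k-th power
      have hfinal : (P.card : ℝ) ^ k ≤ c j * ∏ i ∈ s', c i := by
        calc (P.card : ℝ) ^ k
            ≤ ((c j) ^ ((k : ℝ)⁻¹) * ∏ i ∈ s', (c i) ^ ((k : ℝ)⁻¹)) ^ k :=
              pow_le_pow_left₀ (Nat.cast_nonneg _) hsum k
          _ = c j * ∏ i ∈ s', c i := by
              rw [mul_pow, ← Finset.prod_pow]
              rw [Real.rpow_inv_natCast_pow (hcnn j) hk0]
              congr 1
              exact Finset.prod_congr rfl fun i _ =>
                Real.rpow_inv_natCast_pow (hcnn i) hk0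
      rw [Finset.card_insert_of_notMem hj, Nat.add_sub_cancel,
        Finset.prod_insert hj]
      exact hfinal

lemma sq_sum_eq_one {d : ℕ} (x : Fin d → ℤ) (h : ∑ i, (x i) ^ 2 = 1) :
    ∃ i, (x i) ^ 2 = 1 ∧ ∀ j, j ≠ i → x j = 0 := by
  have hex : ∃ i, x i ≠ 0 := by
    by_contra hc
    push_neg at hc
    simp [hc] at h
  obtain ⟨i, hi⟩ := hex
  have h1 : 1 ≤ (x i) ^ 2 := by
    have := Int.one_le_abs (by exact_mod_cast hi)
    nlinarith [sq_abs (x i)]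
  have hsplit : ∑ j, (x j) ^ 2 = (x i) ^ 2 + ∑ j ∈ Finset.univ.erase i, (x j) ^ 2 :=
    (Finset.add_sum_erase _ _ (Finset.mem_univ i)).symm
  have hR0 : 0 ≤ ∑ j ∈ Finset.univ.erase i, (x j) ^ 2 :=
    Finset.sum_nonneg fun j _ => sq_nonneg _
  have hRz : ∑ j ∈ Finset.univ.erase i, (x j) ^ 2 = 0 := by omega
  refine ⟨i, by omega, fun j hj => ?_⟩
  have := (Finset.sum_eq_zero_iff_of_nonneg fun j _ => sq_nonneg (x j)).mp hRz j
    (Finset.mem_erase.mpr ⟨hj, Finset.mem_univ j⟩)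
  exact pow_eq_zero_iff (by norm_num) |>.mp this

lemma dir_bound {d : ℕ} (P : Finset (Fin d → ℤ)) (i : Fin d) :
    (P.offDiag.filter (fun p => p.1 i = p.2 i + 1 ∧ ∀ j, j ≠ i → p.1 j = p.2 j)).card
      + (P.image (projZ i)).card ≤ P.card := by
  set Ep := P.offDiag.filter (fun p => p.1 i = p.2 i + 1 ∧ ∀ j, j ≠ i → p.1 j = p.2 j) with hEp
  set A := Ep.image (fun p => p.1) with hA
  have hAcard : A.card = Ep.card := by
    apply Finset.card_image_of_injOn
    intro x hx y hy hxy
    have hx' := Finset.mem_filter.mp hx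
    have hy' := Finset.mem_filter.mp hy
    have h2 : x.2 = y.2 := by
      funext j
      by_cases hj : j = i
      · subst hj
        have e1 : x.1 j = x.2 j + 1 := hx'.2.1
        have e2 : y.1 j = y.2 j + 1 := hy'.2.1
        have e3 : x.1 j = y.1 j := congrFun hxy j
        omega
      · have e1 : x.1 j = x.2 j := hx'.2.2 j hj
        have e2 : y.1 j = y.2 j := hy'.2.2 j hj
        have e3 : x.1 j = y.1 j := congrFun hxy j
        omega
    exact Prod.ext hxy h2
  have hAP : A ⊆ P := by
    intro x hx
    obtain ⟨p, hp, rfl⟩ := Finset.mem_image.mp hx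
    exact (Finset.mem_offDiag.mp (Finset.mem_filter.mp hp).1).1
  have hmin : ∀ y ∈ P.image (projZ i), ∃ p, (p ∈ P ∧ projZ i p = y) ∧
      ∀ q ∈ P, projZ i q = y → p i ≤ q i := by
    intro y hy
    have hne : (P.filter (fun q => projZ i q = y)).Nonempty := by
      obtain ⟨p, hp, hpy⟩ := Finset.mem_image.mp hy
      exact ⟨p, Finset.mem_filter.mpr ⟨hp, hpy⟩⟩
    obtain ⟨p, hp, hpmin⟩ := Finset.exists_min_image _ (fun q => q i) hne
    have hp' := Finset.mem_filter.mp hp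
    exact ⟨p, ⟨hp'.1, hp'.2⟩, fun q hq hqy => hpmin q (Finset.mem_filter.mpr ⟨hq, hqy⟩)⟩
  choose m hm hmmin using hmin
  set B := (P.image (projZ i)).attach.image (fun y => m y.1 y.2) with hB
  have hBcard : B.card = (P.image (projZ i)).card := by
    rw [hB]
    rw [Finset.card_image_of_injOn, Finset.card_attach]
    intro y1 _ y2 _ hmy
    have e1 : projZ i (m y1.1 y1.2) = y1.1 := (hm y1.1 y1.2).2
    have e2 : projZ i (m y2.1 y2.2) = y2.1 := (hm y2.1 y2.2).2
    have hmy' : m y1.1 y1.2 = m y2.1 y2.2 := hmy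
    apply Subtype.ext
    rw [← e1, ← e2, hmy']
  have hBP : B ⊆ P := by
    intro x hx
    obtain ⟨y, _, rfl⟩ := Finset.mem_image.mp hx
    exact (hm y.1 y.2).1
  have hdisj : Disjoint A B := by
    rw [Finset.disjoint_left]
    intro x hxA hxB
    obtain ⟨p, hp, hpx⟩ := Finset.mem_image.mp hxA
    obtain ⟨y, _, hyx⟩ := Finset.mem_image.mp hxB
    have hp' := Finset.mem_filter.mp hp
    have hq : p.2 ∈ P := (Finset.mem_offDiag.mp hp'.1).2.1
    have hproj : projZ i p.2 = projZ i x := by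
      funext l
      by_cases hl : l = i
      · subst hl; simp [projZ]
      · rw [projZ, projZ, Function.update_of_ne hl, Function.update_of_ne hl,
          ← hpx, (hp'.2.2 l hl)]
    have hyval : projZ i x = y.1 := by rw [← hyx]; exact (hm y.1 y.2).2
    have hmin2 : x i ≤ p.2 i := by
      rw [← hyx]
      exact hmmin y.1 y.2 p.2 hq (by rw [hproj, hyval])
    have : p.1 i = p.2 i + 1 := hp'.2.1
    rw [hpx] at this
    omega
  calc Ep.card + (P.image (projZ i)).card = A.card + B.card := by rw [hAcard, hBcard]
    _ = (A ∪ B).card := (Finset.card_union_of_disjoint hdisj).symm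
    _ ≤ P.card := Finset.card_le_card (Finset.union_subset hAP hBP)

/-- Twice the number of adjacent pairs: ordered pairs of distinct points of `P ⊆ ℤ^d`
at Euclidean distance exactly `1`. -/
def adjPairsZ {d : ℕ} (P : Finset (Fin d → ℤ)) : ℕ :=
  (P.offDiag.filter fun p => (∑ i, (p.1 i - p.2 i) ^ 2) = 1).card

lemma int_sq_one {a b : ℤ} : (a - b) ^ 2 = 1 ↔ (a = b + 1 ∨ b = a + 1) := by
  constructor
  · intro h
    have h2 : (a - b - 1) * (a - b + 1) = 0 := by nlinarith
    rcases mul_eq_zero.mp h2 with h3 | h3 <;> omega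
  · rintro (rfl | rfl) <;> ring

lemma adj_decomp {d : ℕ} (P : Finset (Fin d → ℤ)) :
    adjPairsZ P = 2 * ∑ i : Fin d,
      (P.offDiag.filter (fun p => p.1 i = p.2 i + 1 ∧ ∀ j, j ≠ i → p.1 j = p.2 j)).card := by
  set Ep := fun i : Fin d =>
    P.offDiag.filter (fun p => p.1 i = p.2 i + 1 ∧ ∀ j, j ≠ i → p.1 j = p.2 j) with hEp
  set Em := fun i : Fin d =>
    P.offDiag.filter (fun p => p.2 i = p.1 i + 1 ∧ ∀ j, j ≠ i → p.1 j = p.2 j) with hEm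
  set E := fun i : Fin d =>
    P.offDiag.filter (fun p => (p.1 i - p.2 i) ^ 2 = 1 ∧ ∀ j, j ≠ i → p.1 j = p.2 j) with hE
  have hdecomp : P.offDiag.filter (fun p => (∑ i, (p.1 i - p.2 i) ^ 2) = 1)
      = Finset.univ.biUnion E := by
    ext x
    simp only [Finset.mem_biUnion, Finset.mem_univ, true_and, hE, Finset.mem_filter]
    constructor
    · rintro ⟨hx, hsum⟩
      obtain ⟨i, hi1, hi2⟩ := sq_sum_eq_one _ hsum
      exact ⟨i, hx, hi1, fun j hj => by have := hi2 j hj; omega⟩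
    · rintro ⟨i, hx, hi1, hi2⟩
      refine ⟨hx, ?_⟩
      rw [Finset.sum_eq_single_of_mem i (Finset.mem_univ i)]
      · exact hi1
      · intro j _ hj
        have := hi2 j hj
        have : x.1 j - x.2 j = 0 := by omega
        rw [this]; ring
  have hdisjE : ∀ i1 ∈ (Finset.univ : Finset (Fin d)), ∀ i2 ∈ Finset.univ, i1 ≠ i2 →
      Disjoint (E i1) (E i2) := by
    intro i1 _ i2 _ hne
    rw [Finset.disjoint_left]
    intro x h1 h2
    have h1' := (Finset.mem_filter.mp h1).2
    have h2' := (Finset.mem_filter.mp h2).2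
    have := h2'.2 i1 hne
    have := h1'.1
    nlinarith [this]
  have hsplit : ∀ i : Fin d, (E i).card = (Ep i).card + (Em i).card := by
    intro i
    have hfe : E i = Ep i ∪ Em i := by
      rw [hE, hEp, hEm]
      rw [← Finset.filter_or]
      apply Finset.filter_congr
      intro x _
      constructor
      · rintro ⟨h1, h2⟩
        rcases int_sq_one.mp h1 with h | h
        · exact Or.inl ⟨h, h2⟩
        · exact Or.inr ⟨h, h2⟩
      · rintro (⟨h1, h2⟩ | ⟨h1, h2⟩)
        · exact ⟨int_sq_one.mpr (Or.inl h1), h2⟩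
        · exact ⟨int_sq_one.mpr (Or.inr h1), h2⟩
    have hd : Disjoint (Ep i) (Em i) := by
      rw [Finset.disjoint_left]
      intro x h1 h2
      have h1' := (Finset.mem_filter.mp h1).2.1
      have h2' := (Finset.mem_filter.mp h2).2.1
      omega
    rw [hfe, Finset.card_union_of_disjoint hd]
  have hswap : ∀ i : Fin d, (Em i).card = (Ep i).card := by
    intro i
    have himg : Em i = (Ep i).image Prod.swap := by
      ext x
      simp only [hEm, hEp, Finset.mem_filter, Finset.mem_image]
      constructor
      · rintro ⟨hx, h1, h2⟩
        refine ⟨x.swap, ⟨?_, h1, fun j hj => (h2 j hj).symm⟩, Prod.swap_swap x⟩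
        have := Finset.mem_offDiag.mp hx
        exact Finset.mem_offDiag.mpr ⟨this.2.1, this.1, fun h => this.2.2 h.symm⟩
      · rintro ⟨a, ⟨ha, h1, h2⟩, rfl⟩
        refine ⟨?_, h1, fun j hj => (h2 j hj).symm⟩
        have := Finset.mem_offDiag.mp ha
        exact Finset.mem_offDiag.mpr ⟨this.2.1, this.1, fun h => this.2.2 h.symm⟩
    rw [himg, Finset.card_image_of_injective _ Prod.swap_injective]
  rw [adjPairsZ, hdecomp, Finset.card_biUnion hdisjE]
  rw [Finset.mul_sum]
  apply Finset.sum_congr rfl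
  intro i _
  rw [hsplit i, hswap i]
  ring

/-- For all `n > 1` and `d ≥ 2`, the number of pairs of points at distance exactly `1`
among `n` points of `ℤ^d` is at most `⌊dn - d·n^((d-1)/d)⌋`. -/
theorem lattice_contact_upper_bound (n d : ℕ) (hn : 1 < n) (hd : 2 ≤ d)
    (P : Finset (Fin d → ℤ)) (hcard : P.card = n) :
    (adjPairsZ P : ℤ) ≤ 2 * ⌊(d * n - d * (n : ℝ) ^ (((d : ℝ) - 1) / d) : ℝ)⌋ := by
  classical
  set Ep := fun i : Fin d =>
    P.offDiag.filter (fun p => p.1 i = p.2 i + 1 ∧ ∀ j, j ≠ i → p.1 j = p.2 j) with hEp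
  set K := ∑ i : Fin d, (Ep i).card with hK
  have hadj : adjPairsZ P = 2 * K := adj_decomp P
  set c := fun i : Fin d => (P.image (projZ i)).card with hc
  have hKC : K + ∑ i : Fin d, c i ≤ d * n := by
    calc K + ∑ i : Fin d, c i = ∑ i : Fin d, ((Ep i).card + c i) := by
          rw [hK, ← Finset.sum_add_distrib]
      _ ≤ ∑ _i : Fin d, n := Finset.sum_le_sum fun i _ => by
          rw [← hcard]; exact dir_bound P i
      _ = d * n := by simp [Finset.sum_const, mul_comm]
  have hPne : P.Nonempty := Finset.card_pos.mp (by omega)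
  have hdpos : 0 < d := by omega
  have hd0 : (0:ℝ) < (d:ℝ) := by exact_mod_cast hdpos
  -- Loomis–Whitney
  have hLW : ((n:ℝ)) ^ (d - 1) ≤ ∏ i : Fin d, ((c i : ℝ)) := by
    have := LW (Finset.univ : Finset (Fin d)) P hPne (fun p _ j hj => absurd (Finset.mem_univ j) hj)
    rw [Finset.card_univ, Fintype.card_fin, hcard] at this
    exact this
  -- AM–GM
  have hAMGM : (d:ℝ) * (n:ℝ) ^ (((d : ℝ) - 1) / d) ≤ ∑ i : Fin d, ((c i : ℝ)) := by
    have hgm := Real.geom_mean_le_arith_mean_weighted Finset.univ (fun _ => (d:ℝ)⁻¹)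
      (fun i : Fin d => ((c i : ℝ))) (fun i _ => by positivity)
      (by simp [Finset.sum_const, Finset.card_univ]; field_simp)
      (fun i _ => Nat.cast_nonneg _)
    have h1 : ∏ i : Fin d, ((c i : ℝ)) ^ ((d:ℝ)⁻¹) = (∏ i : Fin d, ((c i : ℝ))) ^ ((d:ℝ)⁻¹) :=
      Real.finset_prod_rpow _ _ (fun i _ => Nat.cast_nonneg _) _
    have h2 : ((n:ℝ)) ^ (((d : ℝ) - 1) / d) ≤ (∏ i : Fin d, ((c i : ℝ))) ^ ((d:ℝ)⁻¹) := by
      have h3 : ((n:ℝ) ^ (d - 1)) ^ ((d:ℝ)⁻¹) ≤ (∏ i : Fin d, ((c i : ℝ))) ^ ((d:ℝ)⁻¹) :=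
        Real.rpow_le_rpow (by positivity) hLW (by positivity)
      have h4 : ((n:ℝ) ^ (d - 1)) ^ ((d:ℝ)⁻¹) = (n:ℝ) ^ (((d : ℝ) - 1) / d) := by
        rw [← Real.rpow_natCast (n:ℝ) (d - 1), ← Real.rpow_mul (Nat.cast_nonneg n)]
        congr 1
        rw [Nat.cast_sub (by omega)]
        push_cast
        field_simp
      rw [← h4]; exact h3
    have h5 : ∑ i : Fin d, (d:ℝ)⁻¹ * ((c i : ℝ)) = (d:ℝ)⁻¹ * ∑ i : Fin d, ((c i : ℝ)) := by
      rw [Finset.mul_sum]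
    calc (d:ℝ) * (n:ℝ) ^ (((d : ℝ) - 1) / d)
        ≤ (d:ℝ) * ((∏ i : Fin d, ((c i : ℝ))) ^ ((d:ℝ)⁻¹)) :=
          mul_le_mul_of_nonneg_left h2 (le_of_lt hd0)
      _ = (d:ℝ) * ∏ i : Fin d, ((c i : ℝ)) ^ ((d:ℝ)⁻¹) := by rw [h1]
      _ ≤ (d:ℝ) * ∑ i : Fin d, (d:ℝ)⁻¹ * ((c i : ℝ)) :=
          mul_le_mul_of_nonneg_left hgm (le_of_lt hd0)
      _ = ∑ i : Fin d, ((c i : ℝ)) := by rw [h5, ← mul_assoc, mul_inv_cancel₀ (ne_of_gt hd0), one_mul]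
  -- finish
  rw [hadj]
  push_cast
  rw [mul_comm (2:ℤ), mul_comm (2:ℤ)]
  apply mul_le_mul_of_nonneg_right _ (by norm_num)
  rw [Int.le_floor]
  have hKr : (K:ℝ) + ∑ i : Fin d, ((c i : ℝ)) ≤ (d:ℝ) * (n:ℝ) := by
    have : ((K + ∑ i : Fin d, c i : ℕ) : ℝ) ≤ ((d * n : ℕ) : ℝ) := Nat.cast_le.mpr hKC
    push_cast at this
    linarith
  push_cast
  linarith
end
end
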